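/- arXiv:2401.02078 — 5 statements merged into one kernel-verified Lean document; each statement's English description precedes it below -/
import Mathlib

section
/- Let h ≥ 1, let m_0, m_1, …, m_h be positive real numbers, and let ℓ_0 = 1 and ℓ_1, …, ℓ_h be positive integers such that ℓ_{h−j} divides ℓ_{h−j+1} for 1 ≤ j ≤ h. For 1 ≤ j ≤ h let C_j be the column vector of length ℓ_{h−j+1}/ℓ_{h−j} with all entries equal to 1/√(m_{h−j} m_{h−j+1}), and let B_j be the ℓ_{h−j+1} × ℓ_{h−j} block diagonal matrix with ℓ_{h−j} copies of C_j on its diagonal. Let α_1, …, α_{h+1} be real numbers and let P be the block tridiagonal matrix with diagonal blocks α_1 I_{ℓ_h}, α_2 I_{ℓ_{h−1}}, …, α_h I_{ℓ_1}, α_{h+1} I_{ℓ_0} (the last block is the 1×1 matrix [α_{h+1}]), superdiagonal blocks B_1, …, B_h and subdiagonal blocks B_1^T, …, B_h^T. Define β_1 = α_1 and β_j = α_j − (ℓ_{h−j+2}/ℓ_{h−j+1}) · 1/(m_{h−j+1} m_{h−j+2} β_{j−1}) for 2 ≤ j ≤ h+1. If β_j ≠ 0 for all j = 1, …, h and β_{h+1}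 ≠ 0, then det P = β_1^{ℓ_h} β_2^{ℓ_{h−1}} ⋯ β_h^{ℓ_1} β_{h+1}. -/
open Matrix

/-- The index type of a block matrix with `h+1` diagonal blocks of sizes
`ℓ h, ℓ (h-1), …, ℓ 0` (from top to bottom). -/
abbrev BTidx (h : ℕ) (ℓ : ℕ → ℕ) : Type := (i : Fin (h + 1)) × Fin (ℓ (h - i.val))

/-- Entry `(a, b)` of the block `B_{i+1}` (of size `ℓ (h-i) × ℓ (h-i-1)`):
the block diagonal matrix with `ℓ (h-i-1)` copies of the column vector of length
`ℓ (h-i) / ℓ (h-i-1)` with all entries `1/√(m (h-i-1) * m (h-i))` on its diagonal. -/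
noncomputable def bEnt (h : ℕ) (ℓ : ℕ → ℕ) (m : ℕ → ℝ) (i a b : ℕ) : ℝ :=
  if a / (ℓ (h - i) / ℓ (h - i - 1)) = b then 1 / Real.sqrt (m (h - i - 1) * m (h - i)) else 0

lemma nat_div_eq_iff' {r a b : ℕ} (hr : 0 < r) : a / r = b ↔ b * r ≤ a ∧ a < b * r + r := by
  constructor
  · rintro rfl
    have h1 := Nat.div_add_mod a r
    rw [Nat.mul_comm r (a / r)] at h1
    have h2 := Nat.mod_lt a hr
    omega
  · rintro ⟨h1, h2⟩
    exact Nat.div_eq_of_lt_le h1 (by rw [Nat.succ_mul]; omega)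

lemma sum_ind (N r b : ℕ) (c : ℝ) (hr : 0 < r) (hbN : b * r + r ≤ N) :
    ∑ a : Fin N, (if a.val / r = b then c else 0) = (r : ℝ) * c := by
  rw [Fin.sum_univ_eq_sum_range (fun a => if a / r = b then c else 0) N,
    ← Finset.sum_filter]
  have hfil : (Finset.range N).filter (fun a => a / r = b) = Finset.Ico (b * r) (b * r + r) := by
    ext a
    simp only [Finset.mem_filter, Finset.mem_range, Finset.mem_Ico, nat_div_eq_iff' hr]
    omega
  rw [hfil]
  simp [Nat.add_sub_cancel_left, mul_comm]

lemma bOrtho (h : ℕ) (ℓ : ℕ → ℕ) (m : ℕ → ℝ) (i : ℕ)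
    (hdv : ℓ (h - i - 1) ∣ ℓ (h - i)) (hpos : 0 < ℓ (h - i - 1)) (hpos2 : 0 < ℓ (h - i))
    (hx : 0 ≤ m (h - i - 1) * m (h - i)) (b b' : ℕ) (hb : b < ℓ (h - i - 1)) :
    ∑ a : Fin (ℓ (h - i)), bEnt h ℓ m i a.val b * bEnt h ℓ m i a.val b' =
      if b = b' then ((ℓ (h - i) / ℓ (h - i - 1) : ℕ) : ℝ) * (1 / (m (h - i - 1) * m (h - i)))
      else 0 := by
  set r := ℓ (h - i) / ℓ (h - i - 1) with hr
  have hrmul : r * ℓ (h - i - 1) = ℓ (h - i) := Nat.div_mul_cancel hdv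
  have hrpos : 0 < r := by
    rcases Nat.eq_zero_or_pos r with h0 | h0
    · rw [h0] at hrmul; omega
    · exact h0
  set c := 1 / Real.sqrt (m (h - i - 1) * m (h - i)) with hc
  have hcc : c * c = 1 / (m (h - i - 1) * m (h - i)) := by
    rw [hc, div_mul_div_comm, one_mul, Real.mul_self_sqrt hx]
  rcases eq_or_ne b b' with rfl | hbb
  · rw [if_pos rfl]
    have : ∀ a : Fin (ℓ (h - i)), bEnt h ℓ m i a.val b * bEnt h ℓ m i a.val b
        = if a.val / r = b then c * c else 0 := by
      intro a
      unfold bEnt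
      rw [← hr, ← hc]
      split_ifs <;> simp
    rw [Finset.sum_congr rfl (fun a _ => this a),
      sum_ind _ r b (c * c) hrpos (by nlinarith [hrmul]), hcc]
  · rw [if_neg hbb]
    apply Finset.sum_eq_zero
    intro a _
    unfold bEnt
    rw [← hr]
    split_ifs with h1 h2 <;> first | (exfalso; omega) | ring

noncomputable def Lmat (h : ℕ) (ℓ : ℕ → ℕ) (m : ℕ → ℝ) (β : ℕ → ℝ) :
    Matrix (BTidx h ℓ) (BTidx h ℓ) ℝ :=
  fun p q =>
    if p.1.val = q.1.val then (if p.2.val = q.2.val then 1 else 0)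
    else if q.1.val + 1 = p.1.val then bEnt h ℓ m q.1.val q.2.val p.2.val / β (q.1.val + 1)
    else 0

variable {h : ℕ} {ℓ : ℕ → ℕ} {m : ℕ → ℝ} {β : ℕ → ℝ}

lemma Lmat_zero (a b : Fin (h + 1)) (x : Fin (ℓ (h - a.val))) (y : Fin (ℓ (h - b.val)))
    (h1 : a.val ≠ b.val) (h2 : b.val + 1 ≠ a.val) :
    Lmat h ℓ m β ⟨a, x⟩ ⟨b, y⟩ = 0 := by
  unfold Lmat
  exact (if_neg h1).trans (if_neg h2)

lemma Lmat_diag (a : Fin (h + 1)) (x y : Fin (ℓ (h - a.val))) :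
    Lmat h ℓ m β ⟨a, x⟩ ⟨a, y⟩ = if x.val = y.val then 1 else 0 := by
  unfold Lmat
  exact if_pos rfl

lemma Lmat_sub (a b : Fin (h + 1)) (x : Fin (ℓ (h - a.val))) (y : Fin (ℓ (h - b.val)))
    (h1 : b.val + 1 = a.val) :
    Lmat h ℓ m β ⟨a, x⟩ ⟨b, y⟩ = bEnt h ℓ m b.val y.val x.val / β (b.val + 1) := by
  unfold Lmat
  exact (if_neg (show ¬a.val = b.val by omega)).trans (if_pos h1)

lemma Lmat_det (h : ℕ) (ℓ : ℕ → ℕ) (m : ℕ → ℝ) (β : ℕ → ℝ) :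
    (Lmat h ℓ m β).det = 1 := by
  rw [← Matrix.det_transpose]
  have hbt : ((Lmat h ℓ m β)ᵀ).BlockTriangular (fun p : BTidx h ℓ => p.1) := by
    rintro ⟨a, x⟩ ⟨b, y⟩ hlt
    rw [Matrix.transpose_apply]
    simp only [Fin.lt_iff_val_lt_val] at hlt
    exact Lmat_zero b a y x (by omega) (by omega)
  rw [hbt.det_fintype]
  apply Finset.prod_eq_one
  intro k _
  have : ((Lmat h ℓ m β)ᵀ).toSquareBlock (fun p : BTidx h ℓ => p.1) k = 1 := by
    ext p q
    rcases p with ⟨⟨pi, pj⟩, hp⟩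
    rcases q with ⟨⟨qi, qj⟩, hq⟩
    simp only [Matrix.toSquareBlock_def] at hp hq ⊢
    subst hp
    have : qi = pi := hq
    subst this
    simp only [Matrix.of_apply, Matrix.transpose_apply]
    rcases eq_or_ne pj qj with rfl | hj
    · simp [Lmat, Matrix.one_apply]
    · simp [Lmat, Matrix.one_apply, hj, Ne.symm hj, Fin.val_eq_val]
  rw [this, Matrix.det_one]


/-- The block tridiagonal matrix `P` with diagonal blocks
`α 1 • I_{ℓ h}, α 2 • I_{ℓ (h-1)}, …, α (h+1) • I_{ℓ 0}`, superdiagonal blocks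
`B_1, …, B_h` and subdiagonal blocks `B_1ᵀ, …, B_hᵀ`. -/
noncomputable def Pblk (h : ℕ) (ℓ : ℕ → ℕ) (m : ℕ → ℝ) (α : ℕ → ℝ) :
    Matrix (BTidx h ℓ) (BTidx h ℓ) ℝ :=
  fun p q =>
    if p.1.val = q.1.val then
      (if p.2.val = q.2.val then α (p.1.val + 1) else 0)
    else if p.1.val + 1 = q.1.val then bEnt h ℓ m p.1.val p.2.val q.2.val
    else if q.1.val + 1 = p.1.val then bEnt h ℓ m q.1.val q.2.val p.2.val
    else 0

lemma Pblk_diag {α : ℕ → ℝ} (a : Fin (h + 1)) (x y : Fin (ℓ (h - a.val))) :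
    Pblk h ℓ m α ⟨a, x⟩ ⟨a, y⟩ = if x.val = y.val then α (a.val + 1) else 0 := by
  unfold Pblk
  exact if_pos rfl

lemma Pblk_super {α : ℕ → ℝ} (a b : Fin (h + 1)) (x : Fin (ℓ (h - a.val)))
    (y : Fin (ℓ (h - b.val))) (h2 : a.val + 1 = b.val) :
    Pblk h ℓ m α ⟨a, x⟩ ⟨b, y⟩ = bEnt h ℓ m a.val x.val y.val := by
  unfold Pblk
  exact ((if_neg (show ¬a.val = b.val by omega)).trans (if_pos h2))

lemma Pblk_sub {α : ℕ → ℝ} (a b : Fin (h + 1)) (x : Fin (ℓ (h - a.val)))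
    (y : Fin (ℓ (h - b.val))) (h3 : b.val + 1 = a.val) :
    Pblk h ℓ m α ⟨a, x⟩ ⟨b, y⟩ = bEnt h ℓ m b.val y.val x.val := by
  unfold Pblk
  exact ((if_neg (show ¬a.val = b.val by omega)).trans
    ((if_neg (show ¬a.val + 1 = b.val by omega)).trans (if_pos h3)))

lemma Pblk_far {α : ℕ → ℝ} (a b : Fin (h + 1)) (x : Fin (ℓ (h - a.val)))
    (y : Fin (ℓ (h - b.val))) (h1 : a.val ≠ b.val) (h2 : a.val + 1 ≠ b.val)
    (h3 : b.val + 1 ≠ a.val) :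
    Pblk h ℓ m α ⟨a, x⟩ ⟨b, y⟩ = 0 := by
  unfold Pblk
  exact ((if_neg h1).trans ((if_neg h2).trans (if_neg h3)))

lemma factor (h : ℕ) (m : ℕ → ℝ) (hm : ∀ i, i ≤ h → 0 < m i)
    (ℓ : ℕ → ℕ) (hℓpos : ∀ i, i ≤ h → 0 < ℓ i)
    (hdvd : ∀ j, 1 ≤ j → j ≤ h → ℓ (h - j) ∣ ℓ (h - j + 1))
    (α : ℕ → ℝ) (β : ℕ → ℝ)
    (hβ1 : β 1 = α 1)
    (hβ : ∀ j, 2 ≤ j → j ≤ h + 1 →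
      β j = α j - ((ℓ (h + 2 - j) : ℝ) / (ℓ (h + 1 - j) : ℝ)) *
        (1 / (m (h + 1 - j) * m (h + 2 - j) * β (j - 1))))
    (hne : ∀ j, 1 ≤ j → j ≤ h → β j ≠ 0) :
    Pblk h ℓ m α = Lmat h ℓ m β *
      Matrix.diagonal (fun p : BTidx h ℓ => β (p.1.val + 1)) * (Lmat h ℓ m β)ᵀ := by
  ext p q
  rcases p with ⟨pi, pj⟩
  rcases q with ⟨qi, qj⟩
  have hmul : (Lmat h ℓ m β * Matrix.diagonal (fun p : BTidx h ℓ => β (p.1.val + 1)) *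
      (Lmat h ℓ m β)ᵀ) ⟨pi, pj⟩ ⟨qi, qj⟩
      = ∑ k : Fin (h + 1), ∑ j : Fin (ℓ (h - k.val)),
          Lmat h ℓ m β ⟨pi, pj⟩ ⟨k, j⟩ * β (k.val + 1) * Lmat h ℓ m β ⟨qi, qj⟩ ⟨k, j⟩ := by
    rw [Matrix.mul_apply]
    rw [show (∑ r : BTidx h ℓ, (Lmat h ℓ m β * Matrix.diagonal
        (fun p : BTidx h ℓ => β (p.1.val + 1))) ⟨pi, pj⟩ r * (Lmat h ℓ m β)ᵀ r ⟨qi, qj⟩)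
        = ∑ r : BTidx h ℓ, Lmat h ℓ m β ⟨pi, pj⟩ r * β (r.1.val + 1) *
          Lmat h ℓ m β ⟨qi, qj⟩ r from Finset.sum_congr rfl fun r _ => by
        rw [Matrix.mul_diagonal, Matrix.transpose_apply]]
    rw [← Finset.univ_sigma_univ, Finset.sum_sigma]
  rw [hmul]
  by_cases h1 : pi.val = qi.val
  · -- diagonal block
    have hqi : pi = qi := Fin.ext h1
    subst hqi
    have hGpi : ∑ j : Fin (ℓ (h - pi.val)),
        Lmat h ℓ m β ⟨pi, pj⟩ ⟨pi, j⟩ * β (pi.val + 1) * Lmat h ℓ m β ⟨pi, qj⟩ ⟨pi, j⟩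
        = if pj.val = qj.val then β (pi.val + 1) else 0 := by
      rw [Finset.sum_eq_single pj ?_ (by simp)]
      · rw [Lmat_diag pi pj pj, Lmat_diag pi qj pj]
        rw [if_pos rfl, one_mul]
        by_cases hpq : (pj : ℕ) = (qj : ℕ)
        · rw [if_pos hpq, if_pos hpq.symm, mul_one]
        · rw [if_neg hpq, if_neg (fun hv => hpq hv.symm), mul_zero]
      · intro j _ hj
        rw [Lmat_diag pi pj j, if_neg (fun hv => hj (Fin.ext hv).symm)]
        ring
    by_cases h0 : pi.val = 0
    · rw [Finset.sum_eq_single pi ?_ (by simp)]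
      · have hba : β (pi.val + 1) = α (pi.val + 1) := by rw [h0]; simpa using hβ1
        rw [hGpi, Pblk_diag pi pj qj, hba]
      · intro k _ hk
        have hkv : k.val ≠ pi.val := fun hv => hk (Fin.ext hv)
        apply Finset.sum_eq_zero
        intro j _
        rw [Lmat_zero pi k pj j (by omega) (by omega), zero_mul, zero_mul]
    · -- pi.val ≥ 1 : two surviving outer indices
      have hpi1 : 1 ≤ pi.val := by omega
      have hpih : pi.val ≤ h := by omega
      set i' : Fin (h + 1) := ⟨pi.val - 1, by omega⟩ with hi'
      have hi'v : i'.val = pi.val - 1 := rfl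
      have hii : i' ≠ pi := by
        intro hv
        have hv2 := congrArg Fin.val hv
        omega
      have e1 : h - i'.val - 1 = h - pi.val := by omega
      have e2 : h - i'.val = h - pi.val + 1 := by omega
      have hβne : β pi.val ≠ 0 := hne _ (by omega) (by omega)
      have hdv' : ℓ (h - i'.val - 1) ∣ ℓ (h - i'.val) := by
        rw [e1, e2]
        exact (by omega : h - pi.val + 1 = h - pi.val + 1) ▸ hdvd pi.val hpi1 hpih
      have hsub : ∑ k : Fin (h + 1), ∑ j : Fin (ℓ (h - k.val)),
          Lmat h ℓ m β ⟨pi, pj⟩ ⟨k, j⟩ * β (k.val + 1) * Lmat h ℓ m β ⟨pi, qj⟩ ⟨k, j⟩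
          = ∑ k ∈ ({i', pi} : Finset (Fin (h + 1))), ∑ j : Fin (ℓ (h - k.val)),
            Lmat h ℓ m β ⟨pi, pj⟩ ⟨k, j⟩ * β (k.val + 1) * Lmat h ℓ m β ⟨pi, qj⟩ ⟨k, j⟩ := by
        symm
        apply Finset.sum_subset (Finset.subset_univ _)
        intro k _ hk
        simp only [Finset.mem_insert, Finset.mem_singleton, not_or] at hk
        have hk1 : k.val ≠ pi.val := fun hv => hk.2 (Fin.ext hv)
        have hk2 : k.val + 1 ≠ pi.val := by
          intro hv
          exact hk.1 (Fin.ext (by omega))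
        apply Finset.sum_eq_zero
        intro j _
        rw [Lmat_zero pi k pj j (by omega) (by omega), zero_mul, zero_mul]
      rw [hsub, Finset.sum_pair hii, hGpi, Pblk_diag pi pj qj]
      have hsum : ∑ j : Fin (ℓ (h - i'.val)),
          Lmat h ℓ m β ⟨pi, pj⟩ ⟨i', j⟩ * β (i'.val + 1) * Lmat h ℓ m β ⟨pi, qj⟩ ⟨i', j⟩
          = (∑ j : Fin (ℓ (h - i'.val)),
              bEnt h ℓ m i'.val j.val pj.val * bEnt h ℓ m i'.val j.val qj.val) / β pi.val := by
        rw [Finset.sum_div]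
        apply Finset.sum_congr rfl
        intro j _
        rw [Lmat_sub pi i' pj j (show i'.val + 1 = pi.val by omega),
          Lmat_sub pi i' qj j (show i'.val + 1 = pi.val by omega),
          (show i'.val + 1 = pi.val by omega), div_mul_cancel₀ _ hβne, mul_div_assoc]
      have hortho := bOrtho h ℓ m i'.val hdv'
        (by rw [e1]; exact hℓpos _ (by omega))
        (by rw [e2]; exact hℓpos _ (by omega))
        (by
          have a1 := hm (h - i'.val - 1) (by omega)
          have a2 := hm (h - i'.val) (by omega)
          positivity)
        pj.val qj.val (by rw [e1]; exact pj.isLt)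
      rw [hsum, hortho]
      by_cases hpq : (pj : ℕ) = (qj : ℕ)
      · rw [if_pos hpq, if_pos hpq, if_pos hpq]
        have hβe := hβ (pi.val + 1) (by omega) (by omega)
        rw [(show h + 2 - (pi.val + 1) = h - i'.val by omega),
          (show h + 1 - (pi.val + 1) = h - i'.val - 1 by omega),
          (show pi.val + 1 - 1 = pi.val by omega)] at hβe
        have hl1 : (0 : ℝ) < (ℓ (h - i'.val - 1) : ℝ) := by
          rw [e1]; exact_mod_cast hℓpos _ (by omega)
        have hcast : ((ℓ (h - i'.val) / ℓ (h - i'.val - 1) : ℕ) : ℝ)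
            = (ℓ (h - i'.val) : ℝ) / (ℓ (h - i'.val - 1) : ℝ) :=
          Nat.cast_div hdv' (ne_of_gt hl1)
        rw [hβe, hcast]
        have hm1 : m (h - i'.val - 1) ≠ 0 := ne_of_gt (hm _ (by omega))
        have hm2 : m (h - i'.val) ≠ 0 := ne_of_gt (hm _ (by omega))
        field_simp
        ring
      · rw [if_neg hpq, if_neg hpq, if_neg hpq, zero_div, zero_add]
  · by_cases h2 : pi.val + 1 = qi.val
    · -- superdiagonal block
      have hb : β (pi.val + 1) ≠ 0 := hne _ (by omega) (by omega)
      rw [Finset.sum_eq_single pi ?_ (by simp)]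
      · rw [Finset.sum_eq_single pj ?_ (by simp)]
        · rw [Lmat_diag pi pj pj, Lmat_sub qi pi qj pj h2, Pblk_super pi qi pj qj h2,
            if_pos rfl, one_mul, mul_comm, div_mul_cancel₀ _ hb]
        · intro j _ hj
          rw [Lmat_diag pi pj j, if_neg (fun hv => hj (Fin.ext hv).symm)]
          ring
      · intro k _ hk
        have hkv : k.val ≠ pi.val := fun hv => hk (Fin.ext hv)
        apply Finset.sum_eq_zero
        intro j _
        by_cases hkp : k.val + 1 = pi.val
        · rw [Lmat_zero qi k qj j (by omega) (by omega), mul_zero]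
        · rw [Lmat_zero pi k pj j (by omega) (by omega), zero_mul, zero_mul]
    · by_cases h3 : qi.val + 1 = pi.val
      · -- subdiagonal block
        have hb : β (qi.val + 1) ≠ 0 := hne _ (by omega) (by omega)
        rw [Finset.sum_eq_single qi ?_ (by simp)]
        · rw [Finset.sum_eq_single qj ?_ (by simp)]
          · rw [Lmat_diag qi qj qj, Lmat_sub pi qi pj qj h3, Pblk_sub pi qi pj qj h3,
              if_pos rfl, mul_one, div_mul_cancel₀ _ hb]
          · intro j _ hj
            rw [Lmat_diag qi qj j, if_neg (fun hv => hj (Fin.ext hv).symm)]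
            ring
        · intro k _ hk
          have hkv : k.val ≠ qi.val := fun hv => hk (Fin.ext hv)
          apply Finset.sum_eq_zero
          intro j _
          by_cases hkp : k.val + 1 = qi.val
          · rw [Lmat_zero pi k pj j (by omega) (by omega), zero_mul, zero_mul]
          · rw [Lmat_zero qi k qj j (by omega) (by omega), mul_zero]
      · -- far apart
        rw [Pblk_far pi qi pj qj h1 h2 h3]
        symm
        apply Finset.sum_eq_zero
        intro k _
        apply Finset.sum_eq_zero
        intro j _
        by_cases hkp : k.val = pi.val ∨ k.val + 1 = pi.val
        · rw [Lmat_zero qi k qj j (by omega) (by omega), mul_zero]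
        · push_neg at hkp
          rw [Lmat_zero pi k pj j (by omega) (by omega), zero_mul, zero_mul]

theorem stmt5 (h : ℕ) (hh : 1 ≤ h) (m : ℕ → ℝ) (hm : ∀ i, i ≤ h → 0 < m i)
    (ℓ : ℕ → ℕ) (hℓ0 : ℓ 0 = 1) (hℓpos : ∀ i, i ≤ h → 0 < ℓ i)
    (hdvd : ∀ j, 1 ≤ j → j ≤ h → ℓ (h - j) ∣ ℓ (h - j + 1))
    (α : ℕ → ℝ) (β : ℕ → ℝ)
    (hβ1 : β 1 = α 1)
    (hβ : ∀ j, 2 ≤ j → j ≤ h + 1 →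
      β j = α j - ((ℓ (h + 2 - j) : ℝ) / (ℓ (h + 1 - j) : ℝ)) *
        (1 / (m (h + 1 - j) * m (h + 2 - j) * β (j - 1))))
    (hne : ∀ j, 1 ≤ j → j ≤ h → β j ≠ 0) (hne' : β (h + 1) ≠ 0) :
    (Pblk h ℓ m α).det = (∏ j ∈ Finset.Icc 1 h, β j ^ ℓ (h + 1 - j)) * β (h + 1) := by
  rw [factor h m hm ℓ hℓpos hdvd α β hβ1 hβ hne, Matrix.det_mul, Matrix.det_mul,
    Lmat_det, Matrix.det_transpose, Lmat_det, Matrix.det_diagonal, one_mul, mul_one]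
  rw [← Finset.univ_sigma_univ, Finset.prod_sigma]
  have hconst : ∀ k : Fin (h + 1),
      (∏ j : Fin (ℓ (h - k.val)), β (k.val + 1)) = β (k.val + 1) ^ ℓ (h - k.val) := by
    intro k
    rw [Finset.prod_const, Finset.card_univ, Fintype.card_fin]
  calc ∏ k : Fin (h + 1), ∏ j : Fin (ℓ (h - k.val)), β (k.val + 1)
      = ∏ k ∈ Finset.range (h + 1), β (k + 1) ^ ℓ (h - k) := by
        rw [← Fin.prod_univ_eq_prod_range (fun k => β (k + 1) ^ ℓ (h - k)) (h + 1)]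
        exact Finset.prod_congr rfl fun k _ => hconst k
    _ = (∏ k ∈ Finset.range h, β (k + 1) ^ ℓ (h - k)) * β (h + 1) ^ ℓ (h - h) := by
        rw [Finset.prod_range_succ]
    _ = (∏ j ∈ Finset.Icc 1 h, β j ^ ℓ (h + 1 - j)) * β (h + 1) := by
        congr 1
        · apply Finset.prod_nbij' (fun i => i + 1) (fun j => j - 1)
          · intro a ha; simp only [Finset.mem_range] at ha; simp only [Finset.mem_Icc]; omega
          · intro a ha; simp only [Finset.mem_Icc] at ha; simp only [Finset.mem_range]; omega
          · intro a ha; omega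
          · intro a ha; simp only [Finset.mem_Icc] at ha; omega
          · intro a ha
            rw [(show h + 1 - (a + 1) = h - a by omega)]
        · rw [Nat.sub_self, hℓ0, pow_one]
end

section
/- Let T^1_{m_0,m_1,…,m_{h−1}} be a level-wise regular tree with one root and n vertices, let ψ = { j ∈ {1,…,h} : |L_{h−j+1}| > |L_{h−j}| }, and let φ_0, φ_1, …, φ_{h+1} be the associated polynomials. If λ ∈ ℝ satisfies φ_j(λ) ≠ 0 for all j = 1, …, h and φ_{h+1}(λ) ≠ 0, then det(λ I_n − R(T^1)) = φ_{h+1}(λ) · ∏_{j ∈ ψ} φ_j(λ)^{|L_{h−j+1}| − |L_{h−j}|}. -/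
open Matrix

noncomputable def randic {V : Type*} [Fintype V] [DecidableEq V]
    (G : SimpleGraph V) [DecidableRel G.Adj] : Matrix V V ℝ :=
  fun u v => if G.Adj u v then 1 / Real.sqrt ((G.degree u : ℝ) * (G.degree v : ℝ)) else 0

namespace Stmt7Aux
open SimpleGraph Finset
variable {V : Type*} [DecidableEq V] {G : SimpleGraph V}

lemma walk_eq_of_isPath (hac : G.IsAcyclic) {u v : V} {p q : G.Walk u v}
    (hp : p.IsPath) (hq : q.IsPath) : p = q :=
  congrArg Subtype.val (hac.path_unique ⟨p, hp⟩ ⟨q, hq⟩)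

lemma exists_shortest (hc : G.Connected) (u v : V) :
    ∃ p : G.Walk u v, p.IsPath ∧ p.length = G.dist u v := by
  obtain ⟨p, hp⟩ := hc.exists_walk_length_eq_dist u v
  refine ⟨p.bypass, p.bypass_isPath, le_antisymm ?_ (SimpleGraph.dist_le _)⟩
  exact hp ▸ p.length_bypass_le

lemma dist_lt_of_mem_support {r u x : V} {p : G.Walk r u} (hlen : p.length = G.dist r u)
    (hx : x ∈ p.support) : G.dist r x ≤ G.dist r u ∧ (x ≠ u → G.dist r x < G.dist r u) := by
  have h1 : G.dist r x ≤ (p.takeUntil x hx).length := SimpleGraph.dist_le _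
  have h2 : (p.takeUntil x hx).length + (p.dropUntil x hx).length = p.length := by
    rw [← SimpleGraph.Walk.length_append, p.take_spec hx]
  refine ⟨by omega, fun hxu => ?_⟩
  have hd : 0 < (p.dropUntil x hx).length := by
    by_contra hcon
    push_neg at hcon
    have : (p.dropUntil x hx).Nil :=
      SimpleGraph.Walk.nil_iff_length_eq.mpr (Nat.le_zero.mp hcon)
    exact hxu this.eq
  omega

omit [DecidableEq V] in
lemma concat_isPath {r u v : V} {p : G.Walk r u} (hp : p.IsPath) (huv : G.Adj u v)
    (hv : v ∉ p.support) : (p.concat huv).IsPath := by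
  rw [SimpleGraph.Walk.isPath_def, SimpleGraph.Walk.support_concat]
  exact List.Nodup.append hp.support_nodup (List.nodup_singleton v)
    (by simpa [List.disjoint_singleton] using hv)

lemma adj_dist_ne (htree : G.IsTree) (r : V) {u v : V} (huv : G.Adj u v) :
    G.dist r u ≠ G.dist r v := by
  intro heq
  have hc := htree.isConnected
  obtain ⟨p, hp, hlen⟩ := exists_shortest hc r u
  have hvns : v ∉ p.support := by
    intro hvs
    have := (dist_lt_of_mem_support hlen hvs).2 (G.ne_of_adj huv).symm
    omega
  obtain ⟨q, hq, hlenq⟩ := exists_shortest hc r v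
  have heqw := walk_eq_of_isPath htree.IsAcyclic (concat_isPath hp huv hvns) hq
  have hL := congrArg SimpleGraph.Walk.length heqw
  rw [SimpleGraph.Walk.length_concat, hlen, hlenq] at hL
  omega

lemma adj_dist (htree : G.IsTree) (r : V) {u v : V} (huv : G.Adj u v) :
    G.dist r v = G.dist r u + 1 ∨ G.dist r u = G.dist r v + 1 := by
  have hc := htree.isConnected
  have h1 : G.dist u v = 1 := (SimpleGraph.dist_eq_one_iff_adj).mpr huv
  have h2 : G.dist r v ≤ G.dist r u + 1 := by
    have := hc.dist_triangle (u := r) (v := u) (w := v); omega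
  have h3 : G.dist r u ≤ G.dist r v + 1 := by
    have h1' : G.dist v u = 1 := (SimpleGraph.dist_eq_one_iff_adj).mpr huv.symm
    have := hc.dist_triangle (u := r) (v := v) (w := u); omega
  have := adj_dist_ne htree r huv
  omega

lemma exists_parent (hc : G.Connected) (r v : V) (hv : G.dist r v ≠ 0) :
    ∃ u, G.Adj u v ∧ G.dist r u + 1 = G.dist r v := by
  obtain ⟨p, hp, hlen⟩ := exists_shortest hc r v
  cases p with
  | nil => rw [← hlen] at hv; simp at hv
  | cons h q =>
    obtain ⟨x, q', h', hpe⟩ := SimpleGraph.Walk.exists_cons_eq_concat h q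
    have hL := congrArg SimpleGraph.Walk.length hpe
    rw [SimpleGraph.Walk.length_concat] at hL
    have hx1 : G.dist r x ≤ q'.length := SimpleGraph.dist_le _
    have h1 : G.dist x v = 1 := (SimpleGraph.dist_eq_one_iff_adj).mpr h'
    have hx2 : G.dist r v ≤ G.dist r x + 1 := by
      have := hc.dist_triangle (u := r) (v := x) (w := v); omega
    refine ⟨x, h', ?_⟩
    simp only [SimpleGraph.Walk.length_cons] at hL hlen
    omega

lemma parent_unique (htree : G.IsTree) (r : V) {u₁ u₂ v : V} (h1 : G.Adj u₁ v)
    (h2 : G.Adj u₂ v) (hd1 : G.dist r u₁ + 1 = G.dist r v)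
    (hd2 : G.dist r u₂ + 1 = G.dist r v) : u₁ = u₂ := by
  by_contra hne
  have hc := htree.isConnected
  obtain ⟨p₁, hp₁, hlen₁⟩ := exists_shortest hc r u₁
  obtain ⟨p₂, hp₂, hlen₂⟩ := exists_shortest hc r u₂
  have hv₁ : v ∉ p₁.support := fun hvs => by
    have := (dist_lt_of_mem_support hlen₁ hvs).1; omega
  have hv₂ : v ∉ p₂.support := fun hvs => by
    have := (dist_lt_of_mem_support hlen₂ hvs).1; omega
  have heqw := walk_eq_of_isPath htree.IsAcyclic (concat_isPath hp₁ h1 hv₁)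
    (concat_isPath hp₂ h2 hv₂)
  have hsup := congrArg SimpleGraph.Walk.support heqw
  rw [SimpleGraph.Walk.support_concat, SimpleGraph.Walk.support_concat] at hsup
  have hu₁ : u₁ ∈ (p₂.support).concat v := by
    rw [List.concat_eq_append, ← hsup]
    exact List.mem_append_left _ (SimpleGraph.Walk.end_mem_support p₁)
  rw [List.concat_eq_append, List.mem_append] at hu₁
  rcases hu₁ with hu₁ | hu₁
  · have := (dist_lt_of_mem_support hlen₂ hu₁).2 hne; omega
  · simp only [List.mem_singleton] at hu₁
    exact G.ne_of_adj h1 hu₁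

lemma key_alg (lam A B C L K M1 M2 : ℝ) (hB : B ≠ 0) (hC : C ≠ 0) (hL : L ≠ 0)
    (hM1 : M1 ≠ 0) (hM2 : M2 ≠ 0)
    (hA : A = lam * B - L * K / (L * M2 * M1) * C) :
    A / B + K / (M1 * M2 * (B / C)) = lam := by
  subst hA
  field_simp
  ring

lemma cancel_alg1 (s t : ℝ) (hs : s ≠ 0) (ht : t ≠ 0) :
    (-(1 / (s * t))) * t = -(1 / s) := by
  field_simp

lemma cancel_alg2 (s t : ℝ) (hs : s ≠ 0) (ht : t ≠ 0) :
    t * (-(1 / (s * t))) = -(1 / s) := by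
  field_simp

end Stmt7Aux

open Stmt7Aux SimpleGraph Finset in
set_option maxHeartbeats 1000000 in
theorem stmt7 {V : Type*} [Fintype V] [DecidableEq V]
    (G : SimpleGraph V) [DecidableRel G.Adj] (r : V) (h : ℕ) (m : ℕ → ℕ)
    (hh : 1 ≤ h) (hm0 : 2 ≤ m 0)
    (htree : G.IsTree)
    (hheight : ∀ v, G.dist r v ≤ h)
    (hmax : ∃ v, G.dist r v = h)
    (hdeg : ∀ v, G.degree v = m (G.dist r v))
    (φ : ℕ → ℝ → ℝ)
    (hφ0 : ∀ x, φ 0 x = 1)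
    (hφ1 : ∀ x, φ 1 x = x)
    (hφ : ∀ j, 2 ≤ j → j ≤ h + 1 → ∀ x, φ j x =
      x * φ (j - 1) x -
        (({v : V | G.dist r v = h + 2 - j}.ncard : ℝ) /
          (({v : V | G.dist r v = h + 1 - j}.ncard : ℝ) *
            (m (h + 2 - j) : ℝ) * (m (h + 1 - j) : ℝ))) * φ (j - 2) x)
    (lam : ℝ)
    (hne : ∀ j, 1 ≤ j → j ≤ h → φ j lam ≠ 0)
    (hne' : φ (h + 1) lam ≠ 0) :
    (lam • (1 : Matrix V V ℝ) - randic G).det =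
      φ (h + 1) lam *
        ∏ j ∈ (Finset.Icc 1 h).filter
            (fun j => {v : V | G.dist r v = h - j}.ncard <
              {v : V | G.dist r v = h - j + 1}.ncard),
          φ j lam ^ ({v : V | G.dist r v = h - j + 1}.ncard -
            {v : V | G.dist r v = h - j}.ncard) := by
  classical
  have hc := htree.isConnected
  have hac := htree.IsAcyclic
  -- level sizes
  set ℓ : ℕ → ℕ := fun i => (univ.filter fun v => G.dist r v = i).card with hℓdef
  have hncard : ∀ i, {v : V | G.dist r v = i}.ncard = ℓ i := by
    intro i
    rw [Set.ncard_eq_toFinset_card', Set.toFinset_setOf]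
  -- nonempty levels
  have hlevel0 : ∀ k, k ≤ h → ∃ v, G.dist r v = h - k := by
    intro k
    induction k with
    | zero => simpa using hmax
    | succ k ih =>
      intro hk
      obtain ⟨v, hv⟩ := ih (by omega)
      obtain ⟨u, hu, hd⟩ := exists_parent hc r v (by omega)
      exact ⟨u, by omega⟩
  have hlevel : ∀ i, i ≤ h → ∃ v, G.dist r v = i := by
    intro i hi
    obtain ⟨v, hv⟩ := hlevel0 (h - i) (by omega)
    exact ⟨v, by omega⟩
  have hlpos : ∀ i, i ≤ h → 0 < ℓ i := by
    intro i hi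
    obtain ⟨v, hv⟩ := hlevel i hi
    exact card_pos.mpr ⟨v, by simp [hv]⟩
  -- every vertex has a neighbor
  have hadj : ∀ v : V, ∃ w, G.Adj v w := by
    intro v
    by_cases hv : G.dist r v = 0
    · have hvr : v = r := (hc.dist_eq_zero_iff.mp hv).symm
      obtain ⟨w, hw⟩ := hlevel 1 hh
      obtain ⟨u, hu, hd⟩ := exists_parent hc r w (by omega)
      have hur : r = u := hc.dist_eq_zero_iff.mp (by omega)
      exact ⟨w, by rw [hvr, hur]; exact hu⟩
    · obtain ⟨u, hu, _⟩ := exists_parent hc r v hv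
      exact ⟨u, hu.symm⟩
  have hdpos : ∀ v : V, 0 < G.degree v := fun v =>
    (G.degree_pos_iff_exists_adj v).mpr (hadj v)
  have hmpos : ∀ i, i ≤ h → 0 < m i := by
    intro i hi
    obtain ⟨v, hv⟩ := hlevel i hi
    have := hdpos v
    rw [hdeg v, hv] at this
    exact this
  -- children sets
  set childSet : V → Finset V :=
    fun v => (G.neighborFinset v).filter (fun w => G.dist r w = G.dist r v + 1)
    with hchildSet
  set c : ℕ → ℕ := fun i => if i = 0 then m 0 else m i - 1 with hcdef
  have hchild_mem : ∀ u w : V, w ∈ childSet u ↔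
      (G.Adj u w ∧ G.dist r w = G.dist r u + 1) := by
    intro u w
    simp [hchildSet, SimpleGraph.mem_neighborFinset]
  have hchild_card : ∀ v : V, (childSet v).card = c (G.dist r v) := by
    intro v
    have hnb : (G.neighborFinset v).card = m (G.dist r v) := by
      rw [G.card_neighborFinset_eq_degree, hdeg]
    rcases Nat.eq_zero_or_pos (G.dist r v) with h0 | h0
    · have hcs : childSet v = G.neighborFinset v := by
        simp only [hchildSet]
        apply filter_true_of_mem
        intro w hw
        rw [SimpleGraph.mem_neighborFinset] at hw
        rcases adj_dist htree r hw with h1 | h1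
        · exact h1
        · omega
      rw [hcs, hnb, h0, hcdef]
      simp
    · obtain ⟨u₀, hu₀, hd₀⟩ := exists_parent hc r v (by omega)
      have hsplit := Finset.card_filter_add_card_filter_not
        (s := G.neighborFinset v) (p := fun w => G.dist r w = G.dist r v + 1)
      have hpar1 : (G.neighborFinset v).filter
          (fun w => ¬ G.dist r w = G.dist r v + 1) = {u₀} := by
        ext w
        simp only [mem_filter, SimpleGraph.mem_neighborFinset, mem_singleton]
        constructor
        · rintro ⟨hadj', hnd⟩
          rcases adj_dist htree r hadj' with h1 | h1
          · exact absurd h1 hnd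
          · exact parent_unique htree r hadj'.symm hu₀ (by omega) hd₀
        · rintro rfl
          exact ⟨hu₀.symm, by omega⟩
      rw [hpar1, card_singleton, hnb] at hsplit
      have hcv : c (G.dist r v) = m (G.dist r v) - 1 := by
        simp only [hcdef]
        rw [if_neg (by omega)]
      simp only [hchildSet]
      omega
  have hpa : ∃ pa : V → V, ∀ v, G.dist r v ≠ 0 →
      G.Adj (pa v) v ∧ G.dist r (pa v) + 1 = G.dist r v := by
    refine ⟨fun v => if hv : G.dist r v ≠ 0 then (exists_parent hc r v hv).choose else r, ?_⟩
    intro v hv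
    simp only [dif_pos hv]
    exact (exists_parent hc r v hv).choose_spec
  obtain ⟨pa, hpa⟩ := hpa
  have hlevel_card : ∀ i, i < h → ℓ (i + 1) = ℓ i * c i := by
    intro i hi
    have hmaps : ∀ w ∈ univ.filter (fun v => G.dist r v = i + 1),
        pa w ∈ univ.filter (fun v => G.dist r v = i) := by
      intro w hw
      simp only [mem_filter, mem_univ, true_and] at hw ⊢
      have := hpa w (by omega)
      omega
    have hcount := Finset.card_eq_sum_card_fiberwise hmaps
    have hfib : ∀ u ∈ univ.filter (fun v => G.dist r v = i),
        ((univ.filter (fun v => G.dist r v = i + 1)).filter (fun w => pa w = u))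
          = childSet u := by
      intro u hu
      simp only [mem_filter, mem_univ, true_and] at hu
      ext w
      simp only [mem_filter, mem_univ, true_and, hchild_mem]
      constructor
      · rintro ⟨hw, hpw⟩
        have hp := hpa w (by omega)
        rw [hpw] at hp
        exact ⟨hp.1, by omega⟩
      · rintro ⟨haw, hdw⟩
        have hp := hpa w (by omega)
        refine ⟨by omega, ?_⟩
        exact parent_unique htree r hp.1 haw (by omega) (by omega)
    calc ℓ (i + 1)
        = ∑ u ∈ univ.filter (fun v => G.dist r v = i),
            ((univ.filter (fun v => G.dist r v = i + 1)).filter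
              (fun w => pa w = u)).card := hcount
      _ = ∑ _u ∈ univ.filter (fun v => G.dist r v = i), c i := by
          apply Finset.sum_congr rfl
          intro u hu
          rw [hfib u hu, hchild_card u]
          simp only [mem_filter, mem_univ, true_and] at hu
          rw [hu]
      _ = ℓ i * c i := by rw [Finset.sum_const, smul_eq_mul]
  have hl0 : ℓ 0 = 1 := by
    have hset : (univ.filter fun v => G.dist r v = 0) = {r} := by
      ext v
      simp only [mem_filter, mem_univ, true_and, mem_singleton]
      constructor
      · intro hv; exact (hc.dist_eq_zero_iff.mp hv).symm
      · rintro rfl; exact SimpleGraph.dist_self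
    show (univ.filter fun v => G.dist r v = 0).card = 1
    rw [hset, card_singleton]
  have hmono : ∀ i, i < h → ℓ i ≤ ℓ (i + 1) := by
    intro i hi
    have h1 := hlevel_card i hi
    have h2 := hlpos (i + 1) (by omega)
    have h3 := hlpos i (by omega)
    have hc1 : 1 ≤ c i := by
      rcases Nat.eq_zero_or_pos (c i) with h0 | h0
      · rw [h0, Nat.mul_zero] at h1; omega
      · omega
    calc ℓ i = ℓ i * 1 := by ring
      _ ≤ ℓ i * c i := Nat.mul_le_mul_left _ hc1
      _ = ℓ (i + 1) := h1.symm
  -- phi nonzero and delta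
  have hφne : ∀ j, j ≤ h + 1 → φ j lam ≠ 0 := by
    intro j hj
    rcases Nat.eq_zero_or_pos j with h0 | h0
    · rw [h0, hφ0]; norm_num
    · rcases Nat.lt_or_ge j (h + 1) with hlt | hge
      · exact hne j h0 (by omega)
      · have : j = h + 1 := by omega
        rw [this]; exact hne'
  set δ : ℕ → ℝ := fun i => φ (h - i + 1) lam / φ (h - i) lam with hδdef
  have hδne : ∀ i, i ≤ h → δ i ≠ 0 := by
    intro i hi
    exact div_ne_zero (hφne _ (by omega)) (hφne _ (by omega))
  have hδh : δ h = lam := by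
    simp [hδdef, hφ0, hφ1]
  have key : ∀ i, i < h →
      δ i + (c i : ℝ) / ((m i : ℝ) * (m (i + 1) : ℝ) * δ (i + 1)) = lam := by
    intro i hi
    have e1 : h + 2 - (h - i + 1) = i + 1 := by omega
    have e2 : h + 1 - (h - i + 1) = i := by omega
    have e3 : (h - i + 1) - 1 = h - i := by omega
    have e4 : (h - i + 1) - 2 = h - i - 1 := by omega
    have hrec := hφ (h - i + 1) (by omega) (by omega) lam
    rw [e1, e2, e3, e4, hncard, hncard] at hrec
    have hδi : δ i = φ (h - i + 1) lam / φ (h - i) lam := rfl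
    have hδi1 : δ (i + 1) = φ (h - i) lam / φ (h - i - 1) lam := by
      have e5 : h - (i + 1) + 1 = h - i := by omega
      have e6 : h - (i + 1) = h - i - 1 := by omega
      simp only [hδdef]
      rw [e5, e6]
    have hLrel : (ℓ (i + 1) : ℝ) = (ℓ i : ℝ) * (c i : ℝ) := by
      exact_mod_cast hlevel_card i hi
    have hφ1ne : φ (h - i) lam ≠ 0 := hφne _ (by omega)
    have hφ2ne : φ (h - i - 1) lam ≠ 0 := hφne _ (by omega)
    have hlne : (ℓ i : ℝ) ≠ 0 := by
      have := hlpos i (by omega); positivity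
    have hm1ne : (m i : ℝ) ≠ 0 := by
      have := hmpos i (by omega); positivity
    have hm2ne : (m (i + 1) : ℝ) ≠ 0 := by
      have := hmpos (i + 1) (by omega); positivity
    rw [hLrel] at hrec
    rw [hδi, hδi1]
    exact key_alg lam _ _ _ _ _ _ _ hφ1ne hφ2ne hlne hm1ne hm2ne hrec
  -- matrices
  set d : V → ℝ := fun v => (G.degree v : ℝ) with hddef
  have hd_pos : ∀ v, 0 < d v := fun v => by
    simp only [hddef]; exact_mod_cast hdpos v
  set X : Matrix V V ℝ := fun u w =>
    if G.Adj u w ∧ G.dist r w = G.dist r u + 1 then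
      -(1 / (Real.sqrt (d u * d w) * δ (G.dist r w))) else 0 with hXdef
  set A : Matrix V V ℝ := 1 + X with hAdef
  set Dm : Matrix V V ℝ := Matrix.diagonal (fun v => δ (G.dist r v)) with hDdef
  have hA_apply : ∀ u w, A u w = (if u = w then (1:ℝ) else 0) + X u w := by
    intro u w
    simp [hAdef, Matrix.add_apply, Matrix.one_apply]
  have hX0 : ∀ u w, ¬ (G.Adj u w ∧ G.dist r w = G.dist r u + 1) → X u w = 0 := by
    intro u w hn
    simp only [hXdef]
    exact if_neg hn
  have hX1 : ∀ u w, G.Adj u w → G.dist r w = G.dist r u + 1 →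
      X u w = -(1 / (Real.sqrt (d u * d w) * δ (G.dist r w))) := by
    intro u w h1 h2
    simp only [hXdef]
    exact if_pos ⟨h1, h2⟩
  have hentry : ∀ u v, (A * Dm * Aᵀ) u v = ∑ w, A u w * δ (G.dist r w) * A v w := by
    intro u v
    rw [Matrix.mul_apply]
    refine Finset.sum_congr rfl fun w _ => ?_
    rw [hDdef, Matrix.mul_diagonal, Matrix.transpose_apply]
  have expand : ∀ u v, ∑ w, A u w * δ (G.dist r w) * A v w
      = (if u = v then δ (G.dist r u) else 0) + δ (G.dist r u) * X v u
        + X u v * δ (G.dist r v) + ∑ w, X u w * δ (G.dist r w) * X v w := by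
    intro u v
    have step1 : ∀ w, A u w * δ (G.dist r w) * A v w
        = (if u = w then δ (G.dist r w) * A v w else 0)
          + X u w * δ (G.dist r w) * A v w := by
      intro w
      rw [hA_apply u w]
      by_cases hw : u = w
      · rw [if_pos hw, if_pos hw]; ring
      · rw [if_neg hw, if_neg hw]; ring
    rw [Finset.sum_congr rfl fun w _ => step1 w, Finset.sum_add_distrib,
      Finset.sum_ite_eq]
    simp only [Finset.mem_univ, if_true]
    have step2 : ∀ w, X u w * δ (G.dist r w) * A v w
        = (if v = w then X u w * δ (G.dist r w) else 0)
          + X u w * δ (G.dist r w) * X v w := by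
      intro w
      rw [hA_apply v w]
      by_cases hw : v = w
      · rw [if_pos hw, if_pos hw]; ring
      · rw [if_neg hw, if_neg hw]; ring
    rw [Finset.sum_congr rfl fun w _ => step2 w, Finset.sum_add_distrib,
      Finset.sum_ite_eq]
    simp only [Finset.mem_univ, if_true]
    have step3 : δ (G.dist r u) * A v u
        = (if u = v then δ (G.dist r u) else 0) + δ (G.dist r u) * X v u := by
      rw [hA_apply v u]
      by_cases hw : u = v
      · rw [if_pos hw, if_pos (hw.symm)]; ring
      · rw [if_neg hw, if_neg (Ne.symm hw)]; ring
    rw [step3]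
    ring
  have hfact : lam • (1 : Matrix V V ℝ) - randic G = A * Dm * Aᵀ := by
    ext u v
    rw [Matrix.sub_apply, Matrix.smul_apply, Matrix.one_apply, hentry, expand]
    simp only [smul_eq_mul]
    by_cases huv : u = v
    · subst huv
      rw [if_pos rfl, if_pos rfl]
      have hR : randic G u u = 0 := by simp [randic]
      have hXuu : X u u = 0 := hX0 u u (by simp)
      rw [hR, hXuu]
      have hTsub : ∑ w, X u w * δ (G.dist r w) * X u w
          = ∑ w ∈ childSet u, X u w * δ (G.dist r w) * X u w := by
        refine (Finset.sum_subset (Finset.subset_univ _) ?_).symm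
        intro w _ hw
        rw [hchild_mem] at hw
        rw [hX0 u w hw]
        ring
      rcases Nat.lt_or_ge (G.dist r u) h with hlt | hge
      · have hconst : ∀ w ∈ childSet u, X u w * δ (G.dist r w) * X u w
            = 1 / ((m (G.dist r u) : ℝ) * (m (G.dist r u + 1) : ℝ) * δ (G.dist r u + 1)) := by
          intro w hw
          rw [hchild_mem] at hw
          obtain ⟨haw, hdw⟩ := hw
          rw [hX1 u w haw hdw, hdw]
          have hdu : d u = (m (G.dist r u) : ℝ) := by
            simp only [hddef]; rw [hdeg u]
          have hdw' : d w = (m (G.dist r u + 1) : ℝ) := by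
            simp only [hddef]; rw [hdeg w, hdw]
          rw [hdu, hdw']
          have hmpos1 : (0:ℝ) < (m (G.dist r u) : ℝ) := by
            exact_mod_cast hmpos _ (by omega)
          have hmpos2 : (0:ℝ) < (m (G.dist r u + 1) : ℝ) := by
            exact_mod_cast hmpos _ (by omega)
          have hss : Real.sqrt ((m (G.dist r u) : ℝ) * (m (G.dist r u + 1) : ℝ))
              * Real.sqrt ((m (G.dist r u) : ℝ) * (m (G.dist r u + 1) : ℝ))
              = (m (G.dist r u) : ℝ) * (m (G.dist r u + 1) : ℝ) :=
            Real.mul_self_sqrt (by positivity)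
          have hsne : Real.sqrt ((m (G.dist r u) : ℝ) * (m (G.dist r u + 1) : ℝ)) ≠ 0 := by
            positivity
          have hδ1 : δ (G.dist r u + 1) ≠ 0 := hδne _ (by omega)
          rw [← hss]
          field_simp
          simp [Real.sq_sqrt, Real.sqrt_nonneg, mul_nonneg, Nat.cast_nonneg]
        rw [hTsub, Finset.sum_congr rfl hconst, Finset.sum_const, hchild_card u,
          nsmul_eq_mul]
        have hkey := key (G.dist r u) hlt
        have hrw : (c (G.dist r u) : ℝ) *
            (1 / ((m (G.dist r u) : ℝ) * (m (G.dist r u + 1) : ℝ) * δ (G.dist r u + 1)))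
            = (c (G.dist r u) : ℝ) /
              ((m (G.dist r u) : ℝ) * (m (G.dist r u + 1) : ℝ) * δ (G.dist r u + 1)) := by
          ring
        rw [hrw]
        linarith [hkey]
      · have hdu : G.dist r u = h := le_antisymm (hheight u) hge
        have hempty : childSet u = ∅ := by
          rw [Finset.eq_empty_iff_forall_notMem]
          intro w hw
          rw [hchild_mem] at hw
          have := hheight w
          omega
        rw [hTsub, hempty, Finset.sum_empty, hdu, hδh]
        ring
    · rw [if_neg huv, if_neg huv]
      have hzero : ∑ w, X u w * δ (G.dist r w) * X v w = 0 := by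
        apply Finset.sum_eq_zero
        intro w _
        by_cases h1 : G.Adj u w ∧ G.dist r w = G.dist r u + 1
        · by_cases h2 : G.Adj v w ∧ G.dist r w = G.dist r v + 1
          · exact absurd (parent_unique htree r h1.1 h2.1 (by omega) (by omega)) huv
          · rw [hX0 v w h2]; ring
        · rw [hX0 u w h1]; ring
      rw [hzero]
      by_cases hadj' : G.Adj u v
      · have hRd : randic G u v = 1 / Real.sqrt (d u * d v) := by
          simp only [randic, hddef]
          rw [if_pos hadj']
        have hspos : 0 < Real.sqrt (d u * d v) :=
          Real.sqrt_pos.mpr (mul_pos (hd_pos u) (hd_pos v))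
        rcases adj_dist htree r hadj' with hcase | hcase
        · have hXvu : X v u = 0 := hX0 v u (by rintro ⟨_, hdd⟩; omega)
          have hδv : δ (G.dist r v) ≠ 0 := hδne _ (hheight v)
          rw [hXvu, hX1 u v hadj' hcase, hRd,
            cancel_alg1 _ _ (ne_of_gt hspos) hδv]
          ring
        · have hXuv : X u v = 0 := hX0 u v (by rintro ⟨_, hdd⟩; omega)
          have hδu : δ (G.dist r u) ≠ 0 := hδne _ (hheight u)
          rw [hXuv, hX1 v u hadj'.symm hcase, hRd,
            show d v * d u = d u * d v from mul_comm _ _,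
            cancel_alg2 _ _ (ne_of_gt hspos) hδu]
          ring
      · have hRd : randic G u v = 0 := by
          simp only [randic]
          rw [if_neg hadj']
        have hXuv : X u v = 0 := hX0 u v (fun hcon => hadj' hcon.1)
        have hXvu : X v u = 0 := hX0 v u (fun hcon => hadj' hcon.1.symm)
        rw [hRd, hXuv, hXvu]
        ring
  -- determinant of A is 1
  have hbt : A.BlockTriangular (fun v => G.dist r v) := by
    intro i j hij
    have hij' : G.dist r j < G.dist r i := hij
    have hne_ij : i ≠ j := fun he => by rw [he] at hij'; exact lt_irrefl _ hij'
    rw [hA_apply, if_neg hne_ij, hX0 i j (by rintro ⟨_, hdd⟩; omega)]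
    ring
  have hdetA : A.det = 1 := by
    rw [hbt.det]
    apply Finset.prod_eq_one
    intro a _
    have hblock : A.toSquareBlock (fun v => G.dist r v) a = 1 := by
      ext i j
      obtain ⟨i, hi⟩ := i
      obtain ⟨j, hj⟩ := j
      have hi' : G.dist r i = a := hi
      have hj' : G.dist r j = a := hj
      rw [Matrix.toSquareBlock_def, Matrix.of_apply]
      by_cases hij : i = j
      · subst hij
        rw [hA_apply, if_pos rfl, hX0 i i (by simp)]
        rw [Matrix.one_apply_eq]
        ring
      · rw [hA_apply, if_neg hij, hX0 i j (by rintro ⟨_, hdd⟩; omega)]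
        rw [Matrix.one_apply_ne (fun hcon => hij (congrArg Subtype.val hcon))]
        ring
    rw [hblock, Matrix.det_one]
  have hdet : (lam • (1 : Matrix V V ℝ) - randic G).det = ∏ v, δ (G.dist r v) := by
    rw [hfact, Matrix.det_mul, Matrix.det_mul, Matrix.det_transpose, hdetA, hDdef,
      Matrix.det_diagonal, one_mul, mul_one]
  rw [hdet]
  -- Step 1: group by level
  have hstep1 : ∏ v, δ (G.dist r v) = ∏ i ∈ Finset.range (h + 1), δ i ^ ℓ i := by
    rw [← Finset.prod_fiberwise_of_maps_to
      (g := fun v => G.dist r v) (t := Finset.range (h + 1))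
      (fun v _ => Finset.mem_range.mpr (by exact Nat.lt_succ_of_le (hheight v)))
      (fun v => δ (G.dist r v))]
    apply Finset.prod_congr rfl
    intro i _
    have hcg : ∀ v ∈ univ.filter (fun v => G.dist r v = i), δ (G.dist r v) = δ i := by
      intro v hv
      simp only [mem_filter] at hv
      rw [hv.2]
    rw [Finset.prod_congr rfl hcg, Finset.prod_const]
  -- Step 2: reflect the product
  have hstep2 : ∏ i ∈ Finset.range (h + 1), δ i ^ ℓ i
      = ∏ j ∈ Finset.range (h + 1), (φ (j + 1) lam / φ j lam) ^ ℓ (h - j) := by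
    rw [← Finset.prod_range_reflect (fun i => δ i ^ ℓ i) (h + 1)]
    apply Finset.prod_congr rfl
    intro j hj
    rw [Finset.mem_range] at hj
    have e1 : h + 1 - 1 - j = h - j := by omega
    have e2 : h - (h - j) = j := by omega
    simp only [e1, hδdef, e2]
  -- Step 3: telescope
  have hstep3 : ∏ j ∈ Finset.range (h + 1), (φ (j + 1) lam / φ j lam) ^ ℓ (h - j)
      = φ (h + 1) lam *
          ∏ j ∈ Finset.range h, φ (j + 1) lam ^ (ℓ (h - j) - ℓ (h - j - 1)) := by
    have hsplit : ∀ j ∈ Finset.range (h + 1), (φ (j + 1) lam / φ j lam) ^ ℓ (h - j)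
        = φ (j + 1) lam ^ ℓ (h - j) / φ j lam ^ ℓ (h - j) := fun j _ => div_pow _ _ _
    rw [Finset.prod_congr rfl hsplit, Finset.prod_div_distrib,
      Finset.prod_range_succ, Finset.prod_range_succ']
    have e0 : h - h = 0 := by omega
    rw [e0, hl0, pow_one, hφ0, one_pow, mul_one]
    have hterm : ∀ j ∈ Finset.range h,
        φ (j + 1) lam ^ ℓ (h - j) / φ (j + 1) lam ^ ℓ (h - (j + 1))
        = φ (j + 1) lam ^ (ℓ (h - j) - ℓ (h - j - 1)) := by
      intro j hj
      rw [Finset.mem_range] at hj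
      have e1 : h - (j + 1) = h - j - 1 := by omega
      have e2 : h - j - 1 + 1 = h - j := by omega
      have hle : ℓ (h - j - 1) ≤ ℓ (h - j) := by
        have := hmono (h - j - 1) (by omega)
        rwa [e2] at this
      rw [e1, pow_sub₀ _ (hφne (j + 1) (by omega)) hle, div_eq_mul_inv]
    rw [← Finset.prod_congr rfl hterm, Finset.prod_div_distrib]
    ring
  rw [hstep1, hstep2, hstep3]
  congr 1
  -- Step 4: identify with the filtered product
  simp only [hncard]
  have hfilter : ∏ j ∈ (Finset.Icc 1 h).filter (fun j => ℓ (h - j) < ℓ (h - j + 1)),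
        φ j lam ^ (ℓ (h - j + 1) - ℓ (h - j))
      = ∏ j ∈ Finset.Icc 1 h, φ j lam ^ (ℓ (h - j + 1) - ℓ (h - j)) := by
    apply Finset.prod_subset (Finset.filter_subset _ _)
    intro x hx hnx
    rw [Finset.mem_Icc] at hx
    rw [Finset.mem_filter, Finset.mem_Icc] at hnx
    have hnlt : ¬ ℓ (h - x) < ℓ (h - x + 1) := fun hcon => hnx ⟨hx, hcon⟩
    have hle : ℓ (h - x) ≤ ℓ (h - x + 1) := hmono (h - x) (by omega)
    have : ℓ (h - x + 1) - ℓ (h - x) = 0 := by omega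
    rw [this, pow_zero]
  rw [hfilter]
  have hicc : ∏ j ∈ Finset.Icc 1 h, φ j lam ^ (ℓ (h - j + 1) - ℓ (h - j))
      = ∏ i ∈ Finset.range h, φ (i + 1) lam ^ (ℓ (h - i) - ℓ (h - i - 1)) := by
    rw [← Finset.Ico_add_one_right_eq_Icc, Finset.prod_Ico_eq_prod_range]
    have e0 : h + 1 - 1 = h := by omega
    rw [e0]
    apply Finset.prod_congr rfl
    intro i hi
    rw [Finset.mem_range] at hi
    have e1 : 1 + i = i + 1 := by omega
    have e2 : h - (1 + i) + 1 = h - i := by omega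
    have e3 : h - (1 + i) = h - i - 1 := by omega
    rw [e2, e3, e1]
  rw [hicc]
end

section
/- Let T^1_{m_0,m_1,…,m_{h−1}} be a level-wise regular tree with one root, let ψ = { j ∈ {1,…,h} : |L_{h−j+1}| > |L_{h−j}| }, and let φ_0, φ_1, …, φ_{h+1} be the associated polynomials. Then the set of eigenvalues of the Randić matrix R(T^1) equals (⋃_{j ∈ ψ} { λ ∈ ℝ : φ_j(λ) = 0 }) ∪ { λ ∈ ℝ : φ_{h+1}(λ) = 0 }. -/
open Matrix

open SimpleGraph Finset

namespace Stmt9Aux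

variable {V : Type*} [Fintype V] [DecidableEq V] {G : SimpleGraph V} [DecidableRel G.Adj] {r : V}

lemma dist_getVert_le (hc : G.Connected) {u v : V} (p : G.Walk u v) (k : ℕ) :
    G.dist u (p.getVert k) ≤ k := by
  induction p generalizing k with
  | nil => simp [SimpleGraph.Walk.getVert_of_length_le, SimpleGraph.dist_self]
  | @cons u w v ha q ih =>
    cases k with
    | zero => simp
    | succ k =>
      rw [SimpleGraph.Walk.getVert_cons_succ]
      calc G.dist u (q.getVert k) ≤ G.dist u w + G.dist w (q.getVert k) := hc.dist_triangle
        _ ≤ 1 + k := by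
            gcongr
            · exact le_of_eq ((SimpleGraph.dist_eq_one_iff_adj (G:=G)).2 ha)
            · exact ih k
        _ = k + 1 := by omega

lemma getVert_dist (hc : G.Connected) {v : V} (p : G.Walk r v) (hp : p.length = G.dist r v)
    {k : ℕ} (hk : k ≤ p.length) : G.dist r (p.getVert k) = k := by
  have h1 : G.dist r (p.getVert k) ≤ k := dist_getVert_le hc p k
  have h2 : G.dist (p.getVert k) v ≤ p.length - k := by
    have := dist_getVert_le hc p.reverse (p.length - k)
    rw [SimpleGraph.Walk.getVert_reverse] at this
    have hk' : p.length - (p.length - k) = k := by omega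
    rw [hk'] at this
    rw [dist_comm]
    simpa using this
  have h3 : G.dist r v ≤ G.dist r (p.getVert k) + G.dist (p.getVert k) v := hc.dist_triangle
  omega

set_option linter.unusedSectionVars false

lemma not_mem_support_of_dist_lt (hc : G.Connected) {u v : V} (Q : G.Walk r u)
    (hQ : Q.length = G.dist r u) (hlt : Q.length < G.dist r v) : v ∉ Q.support := by
  intro hv
  obtain ⟨n, hn, hnle⟩ := SimpleGraph.Walk.mem_support_iff_exists_getVert.mp hv
  have := getVert_dist hc Q hQ hnle
  rw [hn] at this
  omega

lemma same_dist_not_adj (ht : G.IsTree) {u v : V} (ha : G.Adj u v)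
    (hd : G.dist r u = G.dist r v) : False := by
  have hc := ht.isConnected
  by_cases h0 : G.dist r u = 0
  · have hu : r = u := (hc.dist_eq_zero_iff).mp h0
    have h0' : G.dist r v = 0 := by omega
    have hv : r = v := (hc.dist_eq_zero_iff).mp h0'
    exact ha.ne (hu.symm.trans hv)
  · obtain ⟨Q, hQ⟩ := hc.exists_walk_length_eq_dist r u
    have hQpath : Q.IsPath := Q.isPath_of_length_eq_dist hQ
    have hvQ : v ∉ Q.support := by
      intro hv
      have h1 : G.dist r v ≤ (Q.takeUntil v hv).length := dist_le _
      have h2 := congrArg Walk.length (Q.take_spec hv)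
      rw [Walk.length_append] at h2
      have h3 : (Q.dropUntil v hv).length = 0 := by omega
      have : v = u := Walk.eq_of_length_eq_zero h3
      exact ha.ne this.symm
    have hW : (Q.concat ha).IsPath := by
      rw [← Walk.isPath_reverse_iff, Walk.reverse_concat, Walk.cons_isPath_iff]
      refine ⟨hQpath.reverse, ?_⟩
      rw [Walk.support_reverse]
      simpa using hvQ
    obtain ⟨P, hP⟩ := hc.exists_walk_length_eq_dist r v
    have hPpath : P.IsPath := P.isPath_of_length_eq_dist hP
    have heq := ht.IsAcyclic.path_unique ⟨Q.concat ha, hW⟩ ⟨P, hPpath⟩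
    have hlen := congrArg Walk.length (Subtype.mk_eq_mk.mp heq)
    rw [Walk.length_concat] at hlen
    omega

lemma adj_dist (ht : G.IsTree) {u v : V} (ha : G.Adj u v) :
    G.dist r v = G.dist r u + 1 ∨ G.dist r u = G.dist r v + 1 := by
  have hc := ht.isConnected
  have h1 : G.dist r v ≤ G.dist r u + 1 := by
    have := hc.dist_triangle (u := r) (v := u) (w := v)
    rwa [(SimpleGraph.dist_eq_one_iff_adj (G:=G)).2 ha] at this
  have h2 : G.dist r u ≤ G.dist r v + 1 := by
    have := hc.dist_triangle (u := r) (v := v) (w := u)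
    rwa [(SimpleGraph.dist_eq_one_iff_adj (G:=G)).2 ha.symm] at this
  have h3 : G.dist r u ≠ G.dist r v := fun h => same_dist_not_adj ht ha h
  omega

lemma parent_exists (hc : G.Connected) {v : V} (hv : 1 ≤ G.dist r v) :
    ∃ u, G.Adj v u ∧ G.dist r u + 1 = G.dist r v := by
  obtain ⟨Q, hQ⟩ := hc.exists_walk_length_eq_dist r v
  set d := G.dist r v
  have hlt : d - 1 < Q.length := by omega
  have hadj := Q.adj_getVert_succ hlt
  have hd1 : d - 1 + 1 = d := by omega
  rw [hd1] at hadj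
  have hgv : Q.getVert d = v := by
    have := Q.getVert_length
    rwa [hQ] at this
  rw [hgv] at hadj
  refine ⟨Q.getVert (d-1), hadj.symm, ?_⟩
  rw [getVert_dist hc Q hQ (by omega)]
  omega

lemma parent_unique (ht : G.IsTree) {v u₁ u₂ : V}
    (h₁ : G.Adj v u₁) (hd₁ : G.dist r u₁ + 1 = G.dist r v)
    (h₂ : G.Adj v u₂) (hd₂ : G.dist r u₂ + 1 = G.dist r v) : u₁ = u₂ := by
  have hc := ht.isConnected
  obtain ⟨Q₁, hQ₁⟩ := hc.exists_walk_length_eq_dist r u₁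
  obtain ⟨Q₂, hQ₂⟩ := hc.exists_walk_length_eq_dist r u₂
  have hW₁ : (Q₁.concat h₁.symm).IsPath := by
    rw [← Walk.isPath_reverse_iff, Walk.reverse_concat, Walk.cons_isPath_iff]
    refine ⟨(Q₁.isPath_of_length_eq_dist hQ₁).reverse, ?_⟩
    rw [Walk.support_reverse]
    simpa using not_mem_support_of_dist_lt hc Q₁ hQ₁ (by omega)
  have hW₂ : (Q₂.concat h₂.symm).IsPath := by
    rw [← Walk.isPath_reverse_iff, Walk.reverse_concat, Walk.cons_isPath_iff]
    refine ⟨(Q₂.isPath_of_length_eq_dist hQ₂).reverse, ?_⟩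
    rw [Walk.support_reverse]
    simpa using not_mem_support_of_dist_lt hc Q₂ hQ₂ (by omega)
  have heq := ht.IsAcyclic.path_unique ⟨Q₁.concat h₁.symm, hW₁⟩ ⟨Q₂.concat h₂.symm, hW₂⟩
  have : (Q₁.concat h₁.symm).reverse.getVert 1 = (Q₂.concat h₂.symm).reverse.getVert 1 := by
    rw [Subtype.mk_eq_mk.mp heq]
  rwa [Walk.reverse_concat, Walk.reverse_concat, Walk.getVert_cons_succ,
    Walk.getVert_cons_succ, Walk.getVert_zero, Walk.getVert_zero] at this

variable (G r) in
noncomputable def par (v : V) : V :=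
  if h : ∃ u, G.Adj v u ∧ G.dist r u + 1 = G.dist r v then h.choose else v

lemma par_spec (hc : G.Connected) {v : V} (hv : 1 ≤ G.dist r v) :
    G.Adj v (par G r v) ∧ G.dist r (par G r v) + 1 = G.dist r v := by
  have h := parent_exists hc hv
  rw [par, dif_pos h]
  exact h.choose_spec

lemma par_eq (ht : G.IsTree) {v u : V} (ha : G.Adj v u) (hd : G.dist r u + 1 = G.dist r v) :
    par G r v = u := by
  have hv : 1 ≤ G.dist r v := by omega
  obtain ⟨ha', hd'⟩ := par_spec ht.isConnected hv
  exact parent_unique ht ha' hd' ha hd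

variable (G r) in
noncomputable def childFinset (v : V) : Finset V :=
  (G.neighborFinset v).filter (fun u => G.dist r u = G.dist r v + 1)

lemma mem_childFinset {v u : V} :
    u ∈ childFinset G r v ↔ G.Adj v u ∧ G.dist r u = G.dist r v + 1 := by
  simp [childFinset]

lemma par_of_child (ht : G.IsTree) {v u : V} (hu : u ∈ childFinset G r v) :
    par G r u = v := by
  rw [mem_childFinset] at hu
  exact par_eq ht hu.1.symm (by omega)

lemma neighborFinset_eq (ht : G.IsTree) {v : V} (hv : 1 ≤ G.dist r v) :
    G.neighborFinset v = insert (par G r v) (childFinset G r v) := by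
  ext u
  simp only [Finset.mem_insert, mem_childFinset, SimpleGraph.mem_neighborFinset]
  constructor
  · intro ha
    rcases adj_dist ht ha with hd | hd
    · exact Or.inr ⟨ha, hd⟩
    · exact Or.inl (par_eq ht ha (by omega)).symm
  · rintro (rfl | ⟨ha, _⟩)
    · exact (par_spec ht.isConnected hv).1
    · exact ha

lemma neighborFinset_eq_root (ht : G.IsTree) {v : V} (hv : G.dist r v = 0) :
    G.neighborFinset v = childFinset G r v := by
  ext u
  simp only [mem_childFinset, SimpleGraph.mem_neighborFinset]
  constructor
  · intro ha
    rcases adj_dist ht ha with hd | hd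
    · exact ⟨ha, hd⟩
    · omega
  · exact fun h => h.1

lemma par_not_child (hc : G.Connected) {v : V} (hv : 1 ≤ G.dist r v) :
    par G r v ∉ childFinset G r v := by
  rw [mem_childFinset]
  rintro ⟨-, hd⟩
  have := (par_spec hc hv).2
  omega

def K (m : ℕ → ℕ) (i : ℕ) : ℕ := if i = 0 then m 0 else m i - 1

section WithDeg

variable {h : ℕ} {m : ℕ → ℕ}

lemma card_childFinset (ht : G.IsTree) (hdeg : ∀ v, G.degree v = m (G.dist r v)) (v : V) :
    (childFinset G r v).card = K m (G.dist r v) := by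
  by_cases hv : 1 ≤ G.dist r v
  · have hsplit := neighborFinset_eq ht hv
    have hdc : G.degree v = (childFinset G r v).card + 1 := by
      rw [← SimpleGraph.card_neighborFinset_eq_degree, hsplit,
        Finset.card_insert_of_notMem (par_not_child ht.isConnected hv)]
    have hdm := hdeg v
    have hm1 : 1 ≤ m (G.dist r v) := by
      have : 0 < G.degree v := by omega
      omega
    rw [K, if_neg (by omega)]
    omega
  · have hv0 : G.dist r v = 0 := by omega
    have hcc : (childFinset G r v).card = G.degree v := by
      rw [← SimpleGraph.card_neighborFinset_eq_degree, neighborFinset_eq_root ht hv0]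
    rw [hcc, hdeg v, hv0, K, if_pos rfl]

end WithDeg

variable (G r) in
noncomputable def LF (i : ℕ) : Finset V :=
  Finset.univ.filter (fun v => G.dist r v = i)

lemma mem_LF {i : ℕ} {v : V} : v ∈ LF G r i ↔ G.dist r v = i := by simp [LF]

lemma LF_zero (hc : G.Connected) : LF G r 0 = {r} := by
  ext v
  simp only [mem_LF, Finset.mem_singleton]
  rw [hc.dist_eq_zero_iff]
  exact ⟨fun h => h.symm, fun h => h.symm⟩

lemma level_nonempty {h : ℕ} (hc : G.Connected) (hmax : ∃ v, G.dist r v = h)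
    {i : ℕ} (hi : i ≤ h) : (LF G r i).Nonempty := by
  obtain ⟨v0, hv0⟩ := hmax
  obtain ⟨Q, hQ⟩ := hc.exists_walk_length_eq_dist r v0
  refine ⟨Q.getVert i, ?_⟩
  rw [mem_LF]
  exact getVert_dist hc Q hQ (by omega)

lemma fiber_eq_childFinset (ht : G.IsTree) {i : ℕ} {w : V} (hw : G.dist r w = i) :
    (LF G r (i+1)).filter (fun v => par G r v = w) = childFinset G r w := by
  ext v
  simp only [Finset.mem_filter, mem_LF, mem_childFinset]
  constructor
  · rintro ⟨hd, hp⟩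
    have hv1 : 1 ≤ G.dist r v := by omega
    obtain ⟨ha, -⟩ := par_spec ht.isConnected hv1
    rw [hp] at ha
    exact ⟨ha.symm, by omega⟩
  · rintro ⟨ha, hd⟩
    exact ⟨by omega, par_of_child ht (mem_childFinset.mpr ⟨ha, hd⟩)⟩

lemma card_LF_succ {m : ℕ → ℕ} (ht : G.IsTree) (hdeg : ∀ v, G.degree v = m (G.dist r v))
    (i : ℕ) : (LF G r (i+1)).card = (LF G r i).card * K m i := by
  rw [Finset.card_eq_sum_card_fiberwise (f := par G r) (t := LF G r i) ?_]
  · rw [Finset.sum_congr rfl (fun w hw => ?_), Finset.sum_const, smul_eq_mul]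
    rw [mem_LF] at hw
    rw [fiber_eq_childFinset ht hw, card_childFinset ht hdeg w, hw]
  · intro v hv
    rw [Finset.mem_coe, mem_LF] at hv ⊢
    have hv1 : 1 ≤ G.dist r v := by omega
    have := (par_spec ht.isConnected hv1).2
    omega

section Struct

variable {h : ℕ} {m : ℕ → ℕ}

lemma m_pos (ht : G.IsTree) (hm0 : 2 ≤ m 0) (hmax : ∃ v, G.dist r v = h)
    (hdeg : ∀ v, G.degree v = m (G.dist r v)) {i : ℕ} (hi : i ≤ h) : 1 ≤ m i := by
  obtain ⟨v, hv⟩ := level_nonempty ht.isConnected hmax hi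
  rw [mem_LF] at hv
  by_cases h0 : i = 0
  · rw [h0]; omega
  · have hv1 : 1 ≤ G.dist r v := by omega
    have hadj := (par_spec ht.isConnected hv1).1
    have : 0 < G.degree v := by
      rw [SimpleGraph.degree_pos_iff_exists_adj]
      exact ⟨_, hadj⟩
    rw [hdeg v, hv] at this
    omega

lemma card_LF_pos (hc : G.Connected) (hmax : ∃ v, G.dist r v = h) {i : ℕ} (hi : i ≤ h) :
    0 < (LF G r i).card :=
  Finset.card_pos.mpr (level_nonempty hc hmax hi)

lemma K_pos (ht : G.IsTree) (hmax : ∃ v, G.dist r v = h)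
    (hdeg : ∀ v, G.degree v = m (G.dist r v)) {i : ℕ} (hi : i < h) : 1 ≤ K m i := by
  have h1 := card_LF_pos ht.isConnected hmax (by omega : i + 1 ≤ h)
  rw [card_LF_succ ht hdeg i] at h1
  rcases Nat.eq_zero_or_pos (K m i) with hK | hK
  · rw [hK, Nat.mul_zero] at h1; omega
  · omega

lemma childFinset_top (hheight : ∀ v, G.dist r v ≤ h) {v : V} (hv : G.dist r v = h) :
    childFinset G r v = ∅ := by
  ext u
  simp only [mem_childFinset, Finset.notMem_empty, iff_false]
  rintro ⟨-, hd⟩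
  have := hheight u
  omega

lemma child_exists (ht : G.IsTree) (hm0 : 2 ≤ m 0) (hmax : ∃ v, G.dist r v = h)
    (hdeg : ∀ v, G.degree v = m (G.dist r v)) {v : V} (hv : G.dist r v < h) :
    (childFinset G r v).Nonempty := by
  rw [← Finset.card_pos, card_childFinset ht hdeg v]
  by_cases h0 : G.dist r v = 0
  · rw [h0, K]; simp; omega
  · have := K_pos ht hmax hdeg hv
    omega

end Struct

noncomputable def tfun (m : ℕ → ℕ) : ℕ → ℝ :=
  fun i => ∏ k ∈ Finset.range i, (1 / Real.sqrt ((m k : ℝ) * (m (k+1) : ℝ)))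

lemma tfun_zero (m : ℕ → ℕ) : tfun m 0 = 1 := by simp [tfun]

lemma tfun_succ (m : ℕ → ℕ) (i : ℕ) :
    tfun m (i+1) = tfun m i * (1 / Real.sqrt ((m i : ℝ) * (m (i+1) : ℝ))) := by
  rw [tfun, Finset.prod_range_succ]; rfl

lemma tfun_pos {m : ℕ → ℕ} {h i : ℕ} (hi : i ≤ h) (hm : ∀ k ≤ h, 1 ≤ m k) :
    0 < tfun m i := by
  apply Finset.prod_pos
  intro k hk
  rw [Finset.mem_range] at hk
  have h1 : (1:ℝ) ≤ (m k : ℝ) := by exact_mod_cast hm k (by omega)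
  have h2 : (1:ℝ) ≤ (m (k+1) : ℝ) := by exact_mod_cast hm (k+1) (by omega)
  positivity

lemma mulVec_randic {m : ℕ → ℕ} (ht : G.IsTree) (hdeg : ∀ v, G.degree v = m (G.dist r v))
    (x : V → ℝ) (v : V) :
    (randic G).mulVec x v =
      (if 1 ≤ G.dist r v
        then x (par G r v) / Real.sqrt ((m (G.dist r v) : ℝ) * (m (G.dist r v - 1) : ℝ))
        else 0)
      + (∑ u ∈ childFinset G r v, x u) /
          Real.sqrt ((m (G.dist r v) : ℝ) * (m (G.dist r v + 1) : ℝ)) := by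
  have hsum : (randic G).mulVec x v
      = ∑ u ∈ G.neighborFinset v, x u / Real.sqrt ((G.degree v : ℝ) * (G.degree u : ℝ)) := by
    simp only [Matrix.mulVec, dotProduct, randic]
    rw [SimpleGraph.neighborFinset_eq_filter, Finset.sum_filter]
    apply Finset.sum_congr rfl
    intro u _
    by_cases hadj : G.Adj v u
    · simp only [hadj, if_true]; ring
    · simp [hadj]
  have hchild : ∀ u ∈ childFinset G r v, x u / Real.sqrt ((G.degree v : ℝ) * (G.degree u : ℝ))
      = x u / Real.sqrt ((m (G.dist r v) : ℝ) * (m (G.dist r v + 1) : ℝ)) := by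
    intro u hu
    rw [mem_childFinset] at hu
    rw [hdeg v, hdeg u, hu.2]
  by_cases hv : 1 ≤ G.dist r v
  · rw [hsum, neighborFinset_eq ht hv, Finset.sum_insert (par_not_child ht.isConnected hv),
      if_pos hv]
    congr 1
    · rw [hdeg v, hdeg (par G r v), (show G.dist r (par G r v) = G.dist r v - 1 by
        have := (par_spec ht.isConnected hv).2; omega)]
    · rw [Finset.sum_congr rfl hchild, ← Finset.sum_div]
  · have hv0 : G.dist r v = 0 := by omega
    rw [hsum, neighborFinset_eq_root ht hv0, if_neg hv, zero_add,
      Finset.sum_congr rfl hchild, ← Finset.sum_div]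

section Main

variable {h : ℕ} {m : ℕ → ℕ} {φ : ℕ → ℝ → ℝ} {lam : ℝ}

lemma sum_child_sigma (ht : G.IsTree) (σ : V → ℝ) (g : ℕ → ℝ) (v : V) :
    ∑ u ∈ childFinset G r v, σ u * g (G.dist r u)
      = (∑ u ∈ childFinset G r v, σ u) * g (G.dist r v + 1) := by
  rw [Finset.sum_congr rfl (fun u hu => ?_), ← Finset.sum_mul]
  rw [mem_childFinset] at hu
  rw [hu.2]

lemma m_top (ht : G.IsTree) (hheight : ∀ v, G.dist r v ≤ h) (hmax : ∃ v, G.dist r v = h)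
    (hdeg : ∀ v, G.degree v = m (G.dist r v)) : K m h = 0 := by
  obtain ⟨v, hv⟩ := hmax
  have h1 := card_childFinset ht hdeg v
  rw [childFinset_top hheight hv, hv] at h1
  simp at h1
  omega

lemma sqrt_comm (a b : ℝ) : Real.sqrt (a * b) = Real.sqrt (b * a) := by rw [mul_comm]

lemma div_sq (a : ℝ) {S A : ℝ} (hS : S * S = A) : a * (1/S) / S = a / A := by
  rw [mul_one_div, div_div, hS]

lemma eigen_construct (ht : G.IsTree) (hh : 1 ≤ h) (hm0 : 2 ≤ m 0)
    (hheight : ∀ v, G.dist r v ≤ h) (hmax : ∃ v, G.dist r v = h)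
    (hdeg : ∀ v, G.degree v = m (G.dist r v))
    (hφ0 : ∀ x, φ 0 x = 1) (hφ1 : ∀ x, φ 1 x = x)
    (hφ' : ∀ i < h, ∀ x, φ (h - i + 1) x =
      x * φ (h - i) x - ((K m i : ℝ) / ((m (i+1) : ℝ) * (m i : ℝ))) * φ (h - i - 1) x)
    {i₀ : ℕ} (hi₀ : i₀ ≤ h) {σ : V → ℝ}
    (hA : ∀ v, G.dist r v < i₀ → σ v = 0)
    (hB : ∀ v, i₀ < G.dist r v → σ v = σ (par G r v))
    (hC : ∀ v, G.dist r v = i₀ → σ v * φ (h - i₀ + 1) lam = 0)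
    (hD : ∀ v, G.dist r v + 1 = i₀ → ∑ u ∈ childFinset G r v, σ u = 0) :
    (randic G).mulVec (fun v => σ v * (tfun m (G.dist r v) * φ (h - G.dist r v) lam))
      = lam • (fun v => σ v * (tfun m (G.dist r v) * φ (h - G.dist r v) lam)) := by
  set y : V → ℝ := fun v => σ v * (tfun m (G.dist r v) * φ (h - G.dist r v) lam) with hy
  funext v
  rw [mulVec_randic ht hdeg, Pi.smul_apply, smul_eq_mul]
  have hyv : y v = σ v * (tfun m (G.dist r v) * φ (h - G.dist r v) lam) := rfl
  set i := G.dist r v with hi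
  have hih : i ≤ h := hheight v
  have hchildsum : ∑ u ∈ childFinset G r v, y u
      = (∑ u ∈ childFinset G r v, σ u) * (tfun m (i+1) * φ (h - (i+1)) lam) := by
    rw [← sum_child_sigma ht σ (fun n => tfun m n * φ (h - n) lam) v]
  -- value of y at the parent, when there is one
  have hpar_zero : ∀ (h1 : 1 ≤ i), i - 1 < i₀ → y (par G r v) = 0 := by
    intro h1 hlt
    have hd := (par_spec ht.isConnected h1).2
    have hσ : σ (par G r v) = 0 := hA _ (by omega)
    rw [hy]; simp only []; rw [hσ, zero_mul]
  rcases lt_trichotomy i i₀ with hcase | hcase | hcase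
  · -- below the active zone : everything vanishes
    have hσv : σ v = 0 := hA v hcase
    have hchild0 : (∑ u ∈ childFinset G r v, σ u) = 0 := by
      rcases Nat.lt_or_ge (i+1) i₀ with hlt | hge
      · exact Finset.sum_eq_zero fun u hu => hA u (by
          rw [mem_childFinset] at hu; omega)
      · exact hD v (by omega)
    have hpar : (if 1 ≤ i then y (par G r v)
        / Real.sqrt ((m i : ℝ) * (m (i - 1) : ℝ)) else 0) = 0 := by
      by_cases h1 : 1 ≤ i
      · rw [if_pos h1, hpar_zero h1 (by omega), zero_div]
      · rw [if_neg h1]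
    rw [hpar, hchildsum, hchild0, zero_mul, zero_div, add_zero, hyv, hσv, zero_mul, mul_zero]
  · -- at the top of the active zone : i = i₀
    have hpar : (if 1 ≤ i then y (par G r v)
        / Real.sqrt ((m i : ℝ) * (m (i - 1) : ℝ)) else 0) = 0 := by
      by_cases h1 : 1 ≤ i
      · rw [if_pos h1, hpar_zero h1 (by omega), zero_div]
      · rw [if_neg h1]
    have hsσ : (∑ u ∈ childFinset G r v, σ u) = (K m i : ℝ) * σ v := by
      rw [Finset.sum_congr rfl (fun u hu => ?_), Finset.sum_const,
        card_childFinset ht hdeg v, ← hi, nsmul_eq_mul]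
      rw [hB u (by rw [mem_childFinset] at hu; omega), par_of_child ht hu]
    have hCv := hC v hcase
    rw [← hcase] at hCv
    rw [hpar, zero_add, hchildsum, hsσ, hyv]
    rcases Nat.lt_or_ge i h with hihlt | hihge
    · have hrec := hφ' i hihlt lam
      have hsucc : tfun m (i+1) = tfun m i
          * (1 / Real.sqrt ((m i : ℝ) * (m (i+1) : ℝ))) := tfun_succ m i
      have hSS : Real.sqrt ((m i : ℝ) * (m (i+1) : ℝ))
          * Real.sqrt ((m i : ℝ) * (m (i+1) : ℝ)) = (m i : ℝ) * (m (i+1) : ℝ) :=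
        Real.mul_self_sqrt (by positivity)
      have hidx : h - (i+1) = h - i - 1 := by omega
      rw [hsucc, hidx]
      have expand : (K m i : ℝ) * σ v * (tfun m i
            * (1 / Real.sqrt ((m i : ℝ) * (m (i+1) : ℝ))) * φ (h - i - 1) lam)
            / Real.sqrt ((m i : ℝ) * (m (i+1) : ℝ))
          = ((K m i : ℝ) * σ v * tfun m i * φ (h - i - 1) lam)
            * (1 / Real.sqrt ((m i : ℝ) * (m (i+1) : ℝ)))
            / Real.sqrt ((m i : ℝ) * (m (i+1) : ℝ)) := by ring
      rw [expand, div_sq _ hSS]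
      linear_combination (tfun m i * σ v) * hrec - (tfun m i) * hCv
    · -- i = i₀ = h
      have hieq : i = h := by omega
      have hK0 : K m h = 0 := m_top ht hheight hmax hdeg
      have h1 : h - i + 1 = 1 := by omega
      rw [h1, hφ1] at hCv
      have hz : h - h = 0 := by omega
      have hz1 : h - (h + 1) = 0 := by omega
      rw [hieq, hK0, hz, hφ0, hz1]
      push_cast
      rw [zero_mul, zero_mul, zero_div]
      linear_combination (-(tfun m h) : ℝ) * hCv
  · -- strictly inside the active zone : i₀ < i
    have h1 : 1 ≤ i := by omega
    have hdp := (par_spec ht.isConnected h1).2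
    have hdp' : G.dist r (par G r v) = i - 1 := by omega
    have hσp : σ (par G r v) = σ v := (hB v hcase).symm
    have hypar : y (par G r v) = σ v * (tfun m (i-1) * φ (h - i + 1) lam) := by
      rw [hy]; simp only []
      rw [hdp', hσp]
      have : h - (i - 1) = h - i + 1 := by omega
      rw [this]
    have hparden : Real.sqrt ((m i : ℝ) * (m (i - 1) : ℝ))
        = Real.sqrt ((m (i-1) : ℝ) * (m i : ℝ)) := sqrt_comm _ _
    have htfi : tfun m i = tfun m (i-1) * (1 / Real.sqrt ((m (i-1) : ℝ) * (m i : ℝ))) := by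
      have := tfun_succ m (i-1)
      have hii : i - 1 + 1 = i := by omega
      rwa [hii] at this
    rw [if_pos h1, hypar, hparden, hchildsum, hyv]
    have hsσ : (∑ u ∈ childFinset G r v, σ u) = (K m i : ℝ) * σ v := by
      rw [Finset.sum_congr rfl (fun u hu => ?_), Finset.sum_const,
        card_childFinset ht hdeg v, ← hi, nsmul_eq_mul]
      rw [hB u (by rw [mem_childFinset] at hu; omega), par_of_child ht hu]
    rw [hsσ]
    rcases Nat.lt_or_ge i h with hihlt | hihge
    · have hrec := hφ' i hihlt lam
      have hsucc : tfun m (i+1) = tfun m i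
          * (1 / Real.sqrt ((m i : ℝ) * (m (i+1) : ℝ))) := tfun_succ m i
      have hSS : Real.sqrt ((m i : ℝ) * (m (i+1) : ℝ))
          * Real.sqrt ((m i : ℝ) * (m (i+1) : ℝ)) = (m i : ℝ) * (m (i+1) : ℝ) :=
        Real.mul_self_sqrt (by positivity)
      have hidx : h - (i+1) = h - i - 1 := by omega
      rw [hsucc, hidx, htfi]
      have expand : (K m i : ℝ) * σ v * (tfun m (i-1)
            * (1 / Real.sqrt ((m (i-1) : ℝ) * (m i : ℝ)))
            * (1 / Real.sqrt ((m i : ℝ) * (m (i+1) : ℝ))) * φ (h - i - 1) lam)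
            / Real.sqrt ((m i : ℝ) * (m (i+1) : ℝ))
          = ((K m i : ℝ) * σ v * (tfun m (i-1)
            * (1 / Real.sqrt ((m (i-1) : ℝ) * (m i : ℝ)))) * φ (h - i - 1) lam)
            * (1 / Real.sqrt ((m i : ℝ) * (m (i+1) : ℝ)))
            / Real.sqrt ((m i : ℝ) * (m (i+1) : ℝ)) := by ring
      rw [expand, div_sq _ hSS]
      linear_combination (σ v * (tfun m (i-1)
        * (1 / Real.sqrt ((m (i-1) : ℝ) * (m i : ℝ))))) * hrec
    · -- i = h : leaf
      have hieq : i = h := by omega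
      have hK0 : K m h = 0 := m_top ht hheight hmax hdeg
      rw [hieq] at htfi
      have hz : h - h = 0 := by omega
      rw [hieq, hK0, hz, hφ0, zero_add, hφ1, htfi]
      push_cast
      ring

variable (G r) in
noncomputable def anc (i₀ : ℕ) (v : V) : V := (par G r)^[G.dist r v - i₀] v

lemma anc_self {i₀ : ℕ} {v : V} (hv : G.dist r v = i₀) : anc G r i₀ v = v := by
  rw [anc, hv, Nat.sub_self, Function.iterate_zero_apply]

lemma anc_par (hc : G.Connected) {i₀ : ℕ} {v : V} (hv : i₀ < G.dist r v) :
    anc G r i₀ v = anc G r i₀ (par G r v) := by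
  have h1 : 1 ≤ G.dist r v := by omega
  have hd := (par_spec hc h1).2
  rw [anc, anc]
  have : G.dist r v - i₀ = (G.dist r (par G r v) - i₀) + 1 := by omega
  rw [this, Function.iterate_succ_apply]

lemma anc_dist (hc : G.Connected) {i₀ : ℕ} :
    ∀ k (v : V), G.dist r v = i₀ + k → G.dist r (anc G r i₀ v) = i₀ := by
  intro k
  induction k with
  | zero => intro v hv; rw [anc_self (by omega)]; omega
  | succ k ih =>
    intro v hv
    have h1 : i₀ < G.dist r v := by omega
    rw [anc_par hc h1]
    apply ih
    have := (par_spec hc (by omega : 1 ≤ G.dist r v)).2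
    omega

section Main2

variable {h : ℕ} {m : ℕ → ℕ} {φ : ℕ → ℝ → ℝ} {lam : ℝ}

lemma exists_eigen_phi_top (ht : G.IsTree) (hh : 1 ≤ h) (hm0 : 2 ≤ m 0)
    (hheight : ∀ v, G.dist r v ≤ h) (hmax : ∃ v, G.dist r v = h)
    (hdeg : ∀ v, G.degree v = m (G.dist r v))
    (hφ0 : ∀ x, φ 0 x = 1) (hφ1 : ∀ x, φ 1 x = x)
    (hφ' : ∀ i < h, ∀ x, φ (h - i + 1) x =
      x * φ (h - i) x - ((K m i : ℝ) / ((m (i+1) : ℝ) * (m i : ℝ))) * φ (h - i - 1) x)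
    (hroot : φ (h + 1) lam = 0) :
    ∃ x : V → ℝ, x ≠ 0 ∧ (randic G).mulVec x = lam • x := by
  have hm : ∀ k ≤ h, 1 ≤ m k := fun k hk => m_pos ht hm0 hmax hdeg hk
  refine ⟨fun v => (1:ℝ) * (tfun m (G.dist r v) * φ (h - G.dist r v) lam), ?_, ?_⟩
  · obtain ⟨v0, hv0⟩ := hmax
    intro hzero
    have := congrFun hzero v0
    rw [hv0, Nat.sub_self, hφ0] at this
    simp only [Pi.zero_apply, one_mul, mul_one] at this
    exact (tfun_pos le_rfl hm).ne' this
  · exact eigen_construct ht hh hm0 hheight hmax hdeg hφ0 hφ1 hφ'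
      (Nat.zero_le h) (σ := fun _ => 1)
      (fun v hv => absurd hv (Nat.not_lt_zero _))
      (fun v _ => rfl)
      (fun v hv => by rw [one_mul, Nat.sub_zero, hroot])
      (fun v hv => by omega)

lemma exists_eigen_phi_j (ht : G.IsTree) (hh : 1 ≤ h) (hm0 : 2 ≤ m 0)
    (hheight : ∀ v, G.dist r v ≤ h) (hmax : ∃ v, G.dist r v = h)
    (hdeg : ∀ v, G.degree v = m (G.dist r v))
    (hφ0 : ∀ x, φ 0 x = 1) (hφ1 : ∀ x, φ 1 x = x)
    (hφ' : ∀ i < h, ∀ x, φ (h - i + 1) x =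
      x * φ (h - i) x - ((K m i : ℝ) / ((m (i+1) : ℝ) * (m i : ℝ))) * φ (h - i - 1) x)
    {j : ℕ} (hj1 : 1 ≤ j) (hjh : j ≤ h) (hK2 : 2 ≤ K m (h - j))
    (hrootj : φ j lam = 0) :
    ∃ x : V → ℝ, x ≠ 0 ∧ (randic G).mulVec x = lam • x := by
  have hc := ht.isConnected
  have hm : ∀ k ≤ h, 1 ≤ m k := fun k hk => m_pos ht hm0 hmax hdeg hk
  set i₀ : ℕ := h - j + 1 with hi₀def
  have hi₀1 : 1 ≤ i₀ := by omega
  have hi₀h : i₀ ≤ h := by omega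
  -- find a vertex w at level i₀ - 1 with two children a ≠ b
  obtain ⟨w, hw⟩ := level_nonempty hc hmax (show h - j ≤ h by omega)
  rw [mem_LF] at hw
  have hcardw : (childFinset G r w).card = K m (h - j) := by
    rw [card_childFinset ht hdeg w, hw]
  obtain ⟨a, ha, b, hb, hab⟩ := Finset.one_lt_card.mp (by omega : 1 < (childFinset G r w).card)
  have hda : G.dist r a = i₀ := by
    rw [mem_childFinset] at ha; omega
  have hdb : G.dist r b = i₀ := by
    rw [mem_childFinset] at hb; omega
  set σ : V → ℝ := fun v => if G.dist r v < i₀ then 0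
    else (if anc G r i₀ v = a then 1 else if anc G r i₀ v = b then (-1:ℝ) else 0) with hσdef
  have hσ_at : ∀ v, G.dist r v = i₀ →
      σ v = (if v = a then 1 else if v = b then (-1:ℝ) else 0) := by
    intro v hv
    rw [hσdef]
    simp only []
    rw [if_neg (by omega), anc_self hv]
  have hA : ∀ v, G.dist r v < i₀ → σ v = 0 := by
    intro v hv; rw [hσdef]; simp only []; rw [if_pos hv]
  have hB : ∀ v, i₀ < G.dist r v → σ v = σ (par G r v) := by
    intro v hv
    have hdp := (par_spec hc (by omega : 1 ≤ G.dist r v)).2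
    have e1 : σ v = if anc G r i₀ v = a then 1
        else if anc G r i₀ v = b then (-1:ℝ) else 0 := by
      simp only [hσdef]
      exact if_neg (by omega)
    have e2 : σ (par G r v) = if anc G r i₀ (par G r v) = a then 1
        else if anc G r i₀ (par G r v) = b then (-1:ℝ) else 0 := by
      simp only [hσdef]
      exact if_neg (by omega)
    rw [e1, e2, anc_par hc hv]
  have hC : ∀ v, G.dist r v = i₀ → σ v * φ (h - i₀ + 1) lam = 0 := by
    intro v hv
    have hj' : h - i₀ + 1 = j := by omega
    rw [hj', hrootj, mul_zero]
  have hD : ∀ v, G.dist r v + 1 = i₀ → ∑ u ∈ childFinset G r v, σ u = 0 := by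
    intro v hv
    have hchild_dist : ∀ u ∈ childFinset G r v, G.dist r u = i₀ := by
      intro u hu; rw [mem_childFinset] at hu; omega
    by_cases hvw : v = w
    · subst hvw
      have hsub : {a, b} ⊆ childFinset G r v := by
        intro u hu
        rcases Finset.mem_insert.mp hu with rfl | hu
        · exact ha
        · rw [Finset.mem_singleton] at hu; subst hu; exact hb
      rw [← Finset.sum_sdiff hsub]
      have hz1 : ∑ u ∈ childFinset G r v \ {a, b}, σ u = 0 := by
        apply Finset.sum_eq_zero
        intro u hu
        rw [Finset.mem_sdiff, Finset.mem_insert, Finset.mem_singleton] at hu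
        rw [hσ_at u (hchild_dist u hu.1), if_neg (fun hc' => hu.2 (Or.inl hc')),
          if_neg (fun hc' => hu.2 (Or.inr hc'))]
      rw [hz1, zero_add, Finset.sum_pair hab, hσ_at a (hchild_dist a ha),
        hσ_at b (hchild_dist b hb), if_pos rfl, if_neg hab.symm, if_pos rfl]
      ring
    · apply Finset.sum_eq_zero
      intro u hu
      have hpu : par G r u = v := par_of_child ht hu
      have hpa : par G r a = w := par_of_child ht ha
      have hpb : par G r b = w := par_of_child ht hb
      rw [hσ_at u (hchild_dist u hu)]
      rw [if_neg (fun h' => hvw (by rw [← hpu, h', hpa])),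
        if_neg (fun h' => hvw (by rw [← hpu, h', hpb]))]
  refine ⟨fun v => σ v * (tfun m (G.dist r v) * φ (h - G.dist r v) lam), ?_, ?_⟩
  · -- nonvanishing : descend from a to level h
    have hdesc : ∀ k, i₀ + k ≤ h → ∃ v, G.dist r v = i₀ + k ∧ anc G r i₀ v = a := by
      intro k
      induction k with
      | zero => exact fun _ => ⟨a, by omega, anc_self hda⟩
      | succ k ih =>
        intro hk
        obtain ⟨v, hv, hanc⟩ := ih (by omega)
        obtain ⟨u, hu⟩ := child_exists ht hm0 hmax hdeg (show G.dist r v < h by omega)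
        refine ⟨u, ?_, ?_⟩
        · rw [mem_childFinset] at hu; omega
        · have hdu : G.dist r u = i₀ + (k+1) := by rw [mem_childFinset] at hu; omega
          rw [anc_par hc (by omega), par_of_child ht hu, hanc]
    obtain ⟨v, hv, hanc⟩ := hdesc (h - i₀) (by omega)
    have hvh : G.dist r v = h := by omega
    intro hzero
    have hσv : σ v = 1 := by
      simp only [hσdef]
      rw [if_neg (by omega), if_pos hanc]
    have := congrFun hzero v
    simp only [Pi.zero_apply] at this
    rw [hvh, Nat.sub_self, hφ0, hσv, one_mul, mul_one] at this
    exact (tfun_pos (le_refl h) hm).ne' this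
  · exact eigen_construct ht hh hm0 hheight hmax hdeg hφ0 hφ1 hφ' hi₀h hA hB hC hD

end Main2

lemma mem_spectrum_iff_eigen (M : Matrix V V ℝ) (lam : ℝ) :
    lam ∈ spectrum ℝ M ↔ ∃ x : V → ℝ, x ≠ 0 ∧ M.mulVec x = lam • x := by
  rw [spectrum.mem_iff]
  have hrw : ∀ x : V → ℝ, (algebraMap ℝ (Matrix V V ℝ) lam - M).mulVec x
      = lam • x - M.mulVec x := by
    intro x
    rw [Matrix.sub_mulVec, Algebra.algebraMap_eq_smul_one, Matrix.smul_mulVec,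
      Matrix.one_mulVec]
  constructor
  · intro hnu
    have hdet : (algebraMap ℝ (Matrix V V ℝ) lam - M).det = 0 := by
      by_contra hd
      exact hnu ((Matrix.isUnit_iff_isUnit_det _).mpr (isUnit_iff_ne_zero.mpr hd))
    obtain ⟨x, hx0, hx⟩ := (Matrix.exists_mulVec_eq_zero_iff).mpr hdet
    refine ⟨x, hx0, ?_⟩
    rw [hrw] at hx
    exact (sub_eq_zero.mp hx).symm
  · rintro ⟨x, hx0, hx⟩
    intro hu
    rw [Matrix.isUnit_iff_isUnit_det, isUnit_iff_ne_zero] at hu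
    apply hu
    rw [← Matrix.exists_mulVec_eq_zero_iff]
    refine ⟨x, hx0, ?_⟩
    rw [hrw, hx, sub_self]

section Sub

variable {h : ℕ} {m : ℕ → ℕ} {φ : ℕ → ℝ → ℝ} {lam : ℝ}

lemma transfer (ht : G.IsTree) (hh : 1 ≤ h)
    (hheight : ∀ v, G.dist r v ≤ h)
    (hdeg : ∀ v, G.degree v = m (G.dist r v))
    (hφ0 : ∀ x, φ 0 x = 1) (hφ1 : ∀ x, φ 1 x = x)
    (hφ' : ∀ i < h, ∀ x, φ (h - i + 1) x =
      x * φ (h - i) x - ((K m i : ℝ) / ((m (i+1) : ℝ) * (m i : ℝ))) * φ (h - i - 1) x)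
    {x : V → ℝ} (heig : (randic G).mulVec x = lam • x) :
    ∀ v, 1 ≤ G.dist r v →
      φ (h - G.dist r v + 1) lam * x v
        = φ (h - G.dist r v) lam * x (par G r v)
            / Real.sqrt ((m (G.dist r v) : ℝ) * (m (G.dist r v - 1) : ℝ)) := by
  have key : ∀ n, ∀ v, G.dist r v = h - n → 1 ≤ G.dist r v →
      φ (h - G.dist r v + 1) lam * x v
        = φ (h - G.dist r v) lam * x (par G r v)
            / Real.sqrt ((m (G.dist r v) : ℝ) * (m (G.dist r v - 1) : ℝ)) := by
    intro n
    induction n with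
    | zero =>
      intro v hv h1
      have hvh : G.dist r v = h := by omega
      have hmast := congrFun heig v
      rw [mulVec_randic ht hdeg, Pi.smul_apply, smul_eq_mul, if_pos h1] at hmast
      rw [childFinset_top hheight hvh] at hmast
      simp only [Finset.sum_empty, zero_div, add_zero] at hmast
      rw [hvh, Nat.sub_self, zero_add, hφ1, hφ0, one_mul]
      rw [hvh] at hmast
      linarith [hmast]
    | succ n ih =>
      intro v hv h1
      set i := G.dist r v with hidef
      have hilt : i < h := by omega
      have hmast := congrFun heig v
      rw [mulVec_randic ht hdeg, Pi.smul_apply, smul_eq_mul, if_pos h1] at hmast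
      have hrec := hφ' i hilt lam
      have hSS : Real.sqrt ((m i : ℝ) * (m (i+1) : ℝ))
          * Real.sqrt ((m i : ℝ) * (m (i+1) : ℝ)) = (m i : ℝ) * (m (i+1) : ℝ) :=
        Real.mul_self_sqrt (by positivity)
      have hchild : (∑ u ∈ childFinset G r v, x u) * φ (h - i) lam
          = (K m i : ℝ) * (φ (h - i - 1) lam * x v
              / Real.sqrt ((m i : ℝ) * (m (i+1) : ℝ))) := by
        rw [Finset.sum_mul, Finset.sum_congr rfl (fun u hu => ?_), Finset.sum_const,
          card_childFinset ht hdeg v, ← hidef, nsmul_eq_mul]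
        have hdu : G.dist r u = i + 1 := by rw [mem_childFinset] at hu; omega
        have hIH := ih u (by omega) (by omega)
        rw [hdu] at hIH
        rw [show h - (i+1) + 1 = h - i by omega, show h - (i+1) = h - i - 1 by omega,
          show i + 1 - 1 = i from rfl] at hIH
        rw [mul_comm (x u), hIH, par_of_child ht hu, sqrt_comm]
      have hchild2 : (∑ u ∈ childFinset G r v, x u) * φ (h - i) lam
            / Real.sqrt ((m i : ℝ) * (m (i+1) : ℝ))
          = (K m i : ℝ) * (φ (h - i - 1) lam * x v) / ((m i : ℝ) * (m (i+1) : ℝ)) := by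
        rw [hchild, mul_div_assoc', div_div, hSS]
      linear_combination x v * hrec - φ (h - i) lam * hmast + hchild2
  intro v h1
  exact key (h - G.dist r v) v (by have := hheight v; omega) h1

lemma x_root_zero (ht : G.IsTree) (hh : 1 ≤ h)
    (hheight : ∀ v, G.dist r v ≤ h)
    (hdeg : ∀ v, G.degree v = m (G.dist r v))
    (hφ0 : ∀ x, φ 0 x = 1) (hφ1 : ∀ x, φ 1 x = x)
    (hφ' : ∀ i < h, ∀ x, φ (h - i + 1) x =
      x * φ (h - i) x - ((K m i : ℝ) / ((m (i+1) : ℝ) * (m i : ℝ))) * φ (h - i - 1) x)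
    {x : V → ℝ} (heig : (randic G).mulVec x = lam • x)
    (htop : φ (h + 1) lam ≠ 0) : x r = 0 := by
  have hc := ht.isConnected
  have hdr : G.dist r r = 0 := by
    rw [hc.dist_eq_zero_iff]
  have hmast := congrFun heig r
  rw [mulVec_randic ht hdeg, Pi.smul_apply, smul_eq_mul, hdr] at hmast
  rw [if_neg (by omega)] at hmast
  rw [zero_add] at hmast
  have hrec := hφ' 0 (by omega) lam
  rw [Nat.sub_zero] at hrec
  have hSS : Real.sqrt ((m 0 : ℝ) * (m 1 : ℝ))
      * Real.sqrt ((m 0 : ℝ) * (m 1 : ℝ)) = (m 0 : ℝ) * (m 1 : ℝ) :=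
    Real.mul_self_sqrt (by positivity)
  have hchild : (∑ u ∈ childFinset G r r, x u) * φ h lam
      = (K m 0 : ℝ) * (φ (h - 1) lam * x r
          / Real.sqrt ((m 0 : ℝ) * (m 1 : ℝ))) := by
    rw [Finset.sum_mul, Finset.sum_congr rfl (fun u hu => ?_), Finset.sum_const,
      card_childFinset ht hdeg r, hdr, nsmul_eq_mul]
    have hdu : G.dist r u = 1 := by rw [mem_childFinset] at hu; omega
    have hIH := transfer ht hh hheight hdeg hφ0 hφ1 hφ' heig u (by omega)
    rw [hdu] at hIH
    rw [show h - 1 + 1 = h by omega, show (1:ℕ) - 1 = 0 from rfl] at hIH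
    rw [mul_comm (x u), hIH, par_of_child ht hu, sqrt_comm]
  have hchild2 : (∑ u ∈ childFinset G r r, x u) * φ h lam
        / Real.sqrt ((m 0 : ℝ) * (m 1 : ℝ))
      = (K m 0 : ℝ) * (φ (h - 1) lam * x r) / ((m 0 : ℝ) * (m 1 : ℝ)) := by
    rw [hchild, mul_div_assoc', div_div, hSS]
  have hfin : φ (h + 1) lam * x r = 0 := by
    linear_combination x r * hrec - φ h lam * hmast + hchild2
  rcases mul_eq_zero.mp hfin with h' | h'
  · exact absurd h' htop
  · exact h'

end Sub

section Kill

variable {h : ℕ} {m : ℕ → ℕ} {φ : ℕ → ℝ → ℝ} {lam : ℝ}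

lemma all_zero (ht : G.IsTree) (hh : 1 ≤ h) (hm0 : 2 ≤ m 0)
    (hheight : ∀ v, G.dist r v ≤ h) (hmax : ∃ v, G.dist r v = h)
    (hdeg : ∀ v, G.degree v = m (G.dist r v))
    (hφ0 : ∀ x, φ 0 x = 1) (hφ1 : ∀ x, φ 1 x = x)
    (hφ' : ∀ i < h, ∀ x, φ (h - i + 1) x =
      x * φ (h - i) x - ((K m i : ℝ) / ((m (i+1) : ℝ) * (m i : ℝ))) * φ (h - i - 1) x)
    {x : V → ℝ} (heig : (randic G).mulVec x = lam • x)
    (htop : φ (h + 1) lam ≠ 0)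
    (hpsi : ∀ j, 1 ≤ j → j ≤ h → 2 ≤ K m (h - j) → φ j lam ≠ 0) : x = 0 := by
  have hc := ht.isConnected
  have key : ∀ i, ∀ v, G.dist r v ≤ i → x v = 0 := by
    intro i
    induction i with
    | zero =>
      intro v hv
      have hrv : r = v := hc.dist_eq_zero_iff.mp (by omega)
      rw [← hrv]
      exact x_root_zero ht hh hheight hdeg hφ0 hφ1 hφ' heig htop
    | succ i ih =>
      intro v hv
      rcases Nat.lt_or_ge (G.dist r v) (i+1) with hlt | hge
      · exact ih v (by omega)
      have hdv : G.dist r v = i + 1 := by omega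
      have hvh : i + 1 ≤ h := by have := hheight v; omega
      have h1v : 1 ≤ G.dist r v := by omega
      have hdp : G.dist r (par G r v) + 1 = G.dist r v := (par_spec hc h1v).2
      have hxp : x (par G r v) = 0 := ih (par G r v) (by omega)
      by_cases hφne : φ (h - i) lam = 0
      · -- the forced-path case : K m i = 1
        have hKle : ¬ (2 ≤ K m (h - (h - i))) :=
          fun hK => hpsi (h-i) (by omega) (by omega) hK hφne
        rw [show h - (h - i) = i by omega] at hKle
        have hK1 : K m i = 1 := by
          have := K_pos ht hmax hdeg (show i < h by omega)
          omega
        set p := par G r v with hpdef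
        have hadj := (par_spec hc h1v).1
        have hdpi : G.dist r p = i := by omega
        have hvmem : v ∈ childFinset G r p := mem_childFinset.mpr ⟨hadj.symm, by omega⟩
        have hcard : (childFinset G r p).card = 1 := by
          rw [card_childFinset ht hdeg p, hdpi, hK1]
        have hsingle : childFinset G r p = {v} := by
          obtain ⟨c, hc'⟩ := Finset.card_eq_one.mp hcard
          rw [hc'] at hvmem ⊢
          rw [Finset.mem_singleton] at hvmem
          rw [hvmem]
        have hmast := congrFun heig p
        rw [mulVec_randic ht hdeg, Pi.smul_apply, smul_eq_mul] at hmast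
        have hxpp : (if 1 ≤ G.dist r p then x (par G r p)
            / Real.sqrt ((m (G.dist r p) : ℝ) * (m (G.dist r p - 1) : ℝ)) else 0) = 0 := by
          by_cases h1 : 1 ≤ G.dist r p
          · rw [if_pos h1, ih (par G r p) (by have := (par_spec hc h1).2; omega), zero_div]
          · rw [if_neg h1]
        rw [hxpp, zero_add, hsingle, Finset.sum_singleton, ih p (by omega), mul_zero] at hmast
        have hm1 : 1 ≤ m i := m_pos ht hm0 hmax hdeg (by omega)
        have hm2 : 1 ≤ m (i+1) := m_pos ht hm0 hmax hdeg (by omega)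
        have hsqpos : (0:ℝ) < Real.sqrt ((m (G.dist r p) : ℝ) * (m (G.dist r p + 1) : ℝ)) := by
          rw [hdpi]
          apply Real.sqrt_pos.mpr
          have e1 : (0:ℝ) < (m i : ℝ) := by exact_mod_cast hm1
          have e2 : (0:ℝ) < (m (i+1) : ℝ) := by exact_mod_cast hm2
          positivity
        rcases div_eq_zero_iff.mp hmast with h' | h'
        · exact h'
        · exact absurd h' hsqpos.ne'
      · -- transfer case
        have htr := transfer ht hh hheight hdeg hφ0 hφ1 hφ' heig v h1v
        rw [hdv, show h - (i+1) + 1 = h - i by omega, hxp, mul_zero, zero_div] at htr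
        exact (mul_eq_zero.mp htr).resolve_left hφne
  funext v
  rw [Pi.zero_apply]
  exact key h v (hheight v)

end Kill

lemma ncard_level (i : ℕ) : {v : V | G.dist r v = i}.ncard = (LF G r i).card := by
  rw [show {v : V | G.dist r v = i} = ↑(LF G r i) by ext v; simp [mem_LF]]
  exact Set.ncard_coe_finset _

end Main

end Stmt9Aux

open Stmt9Aux

theorem stmt9 {V : Type*} [Fintype V] [DecidableEq V]
    (G : SimpleGraph V) [DecidableRel G.Adj] (r : V) (h : ℕ) (m : ℕ → ℕ)
    (hh : 1 ≤ h) (hm0 : 2 ≤ m 0)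
    (htree : G.IsTree)
    (hheight : ∀ v, G.dist r v ≤ h)
    (hmax : ∃ v, G.dist r v = h)
    (hdeg : ∀ v, G.degree v = m (G.dist r v))
    (φ : ℕ → ℝ → ℝ)
    (hφ0 : ∀ x, φ 0 x = 1)
    (hφ1 : ∀ x, φ 1 x = x)
    (hφ : ∀ j, 2 ≤ j → j ≤ h + 1 → ∀ x, φ j x =
      x * φ (j - 1) x -
        (({v : V | G.dist r v = h + 2 - j}.ncard : ℝ) /
          (({v : V | G.dist r v = h + 1 - j}.ncard : ℝ) *
            (m (h + 2 - j) : ℝ) * (m (h + 1 - j) : ℝ))) * φ (j - 2) x) :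
    spectrum ℝ (randic G) =
      (⋃ j ∈ {j : ℕ | 1 ≤ j ∧ j ≤ h ∧
          {v : V | G.dist r v = h - j}.ncard < {v : V | G.dist r v = h - j + 1}.ncard},
        {lam : ℝ | φ j lam = 0}) ∪
      {lam : ℝ | φ (h + 1) lam = 0} := by
  have hNpos : ∀ i ≤ h, 0 < (LF G r i).card :=
    fun i hi => card_LF_pos htree.isConnected hmax hi
  have hmpos : ∀ k ≤ h, 1 ≤ m k := fun k hk => m_pos htree hm0 hmax hdeg hk
  -- the recurrence in layer-count-free form
  have hφ' : ∀ i < h, ∀ x, φ (h - i + 1) x =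
      x * φ (h - i) x - ((K m i : ℝ) / ((m (i+1) : ℝ) * (m i : ℝ))) * φ (h - i - 1) x := by
    intro i hi x
    have hrec := hφ (h + 1 - i) (by omega) (by omega) x
    rw [show h + 1 - i - 1 = h - i by omega, show h + 1 - i - 2 = h - i - 1 by omega,
      show h + 2 - (h + 1 - i) = i + 1 by omega, show h + 1 - (h + 1 - i) = i by omega] at hrec
    rw [show h - i + 1 = h + 1 - i by omega, hrec]
    have hcoef : (({v : V | G.dist r v = i + 1}.ncard : ℝ) /
          (({v : V | G.dist r v = i}.ncard : ℝ) * (m (i+1) : ℝ) * (m i : ℝ)))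
        = ((K m i : ℝ) / ((m (i+1) : ℝ) * (m i : ℝ))) := by
      rw [ncard_level, ncard_level, card_LF_succ htree hdeg i]
      have hN : (0:ℝ) < ((LF G r i).card : ℝ) := by
        exact_mod_cast hNpos i (by omega)
      have hm1 : (0:ℝ) < (m (i+1) : ℝ) := by
        have := hmpos (i+1) (by omega); exact_mod_cast this
      have hm2 : (0:ℝ) < (m i : ℝ) := by
        have := hmpos i (by omega); exact_mod_cast this
      push_cast
      field_simp
    rw [hcoef]
  -- bridge between the ncard inequality and `2 ≤ K`
  have hbridge : ∀ j, 1 ≤ j → j ≤ h →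
      ({v : V | G.dist r v = h - j}.ncard < {v : V | G.dist r v = h - j + 1}.ncard
        ↔ 2 ≤ K m (h - j)) := by
    intro j hj1 hjh
    rw [ncard_level, ncard_level, card_LF_succ htree hdeg (h - j)]
    have hN := hNpos (h - j) (by omega)
    constructor
    · intro hlt
      by_contra hK
      have hK1 : K m (h - j) ≤ 1 := by omega
      have := Nat.mul_le_mul_left (LF G r (h-j)).card hK1
      omega
    · intro hK
      have := Nat.mul_le_mul_left (LF G r (h-j)).card hK
      omega
  ext lam
  simp only [Set.mem_union, Set.mem_iUnion, Set.mem_setOf_eq]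
  rw [mem_spectrum_iff_eigen]
  constructor
  · rintro ⟨x, hx0, heig⟩
    by_contra hnot
    push_neg at hnot
    obtain ⟨hpsi, htop⟩ := hnot
    apply hx0
    apply all_zero htree hh hm0 hheight hmax hdeg hφ0 hφ1 hφ' heig htop
    intro j hj1 hjh hK
    exact hpsi j ⟨hj1, hjh, (hbridge j hj1 hjh).mpr hK⟩
  · rintro (⟨j, ⟨hj1, hjh, hlt⟩, hroot⟩ | htop)
    · obtain ⟨x, hx0, heig⟩ := exists_eigen_phi_j htree hh hm0 hheight hmax hdeg hφ0 hφ1 hφ'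
        hj1 hjh ((hbridge j hj1 hjh).mp hlt) hroot
      exact ⟨x, hx0, heig⟩
    · obtain ⟨x, hx0, heig⟩ := exists_eigen_phi_top htree hh hm0 hheight hmax hdeg hφ0 hφ1 hφ' htop
      exact ⟨x, hx0, heig⟩
end

section
/- Let T^1_{m_0,m_1,…,m_{h−1}} be a level-wise regular tree with one root. Then the largest eigenvalue of the Randić matrix R(T^1) equals 1, and 1 is an eigenvalue of the matrix P_{h+1}. -/
open Matrix

/-- The off-diagonal entry of the tridiagonal matrix `P_{h+1}` at (0-indexed)
position `(i, i+1)`. -/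
noncomputable def odOne (h : ℕ) (m : ℕ → ℝ) (i : ℕ) : ℝ :=
  if i + 1 = h then Real.sqrt (1 / m 1)
  else Real.sqrt ((m (h - 1 - i) - 1) / (m (h - i) * m (h - 1 - i)))

/-- For `j ≤ h`, the leading `j × j` principal submatrix `P_j` of the
`(h+1) × (h+1)` symmetric tridiagonal matrix `P_{h+1}` (obtained for `j = h+1`). -/
noncomputable def Pmat (h : ℕ) (m : ℕ → ℝ) (j : ℕ) : Matrix (Fin j) (Fin j) ℝ :=
  fun a b =>
    if a.val + 1 = b.val then odOne h m a.val
    else if b.val + 1 = a.val then odOne h m b.val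
    else 0

open Finset in
theorem aux_mem_spectrum_of_mulVec {n : Type*} [Fintype n] [DecidableEq n]
    (M : Matrix n n ℝ) {μ : ℝ} {x : n → ℝ} (hx : x ≠ 0) (hMx : M *ᵥ x = μ • x) :
    μ ∈ spectrum ℝ M := by
  rw [spectrum.mem_iff, Matrix.isUnit_iff_isUnit_det, isUnit_iff_ne_zero, not_not,
    ← Matrix.exists_mulVec_eq_zero_iff]
  refine ⟨x, hx, ?_⟩
  rw [Matrix.sub_mulVec, Algebra.algebraMap_eq_smul_one, Matrix.smul_mulVec,
    Matrix.one_mulVec, hMx, sub_self]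

theorem aux_exists_mulVec_of_mem_spectrum {n : Type*} [Fintype n] [DecidableEq n]
    {M : Matrix n n ℝ} {μ : ℝ} (h : μ ∈ spectrum ℝ M) :
    ∃ x : n → ℝ, x ≠ 0 ∧ M *ᵥ x = μ • x := by
  rw [spectrum.mem_iff, Matrix.isUnit_iff_isUnit_det, isUnit_iff_ne_zero, not_not,
    ← Matrix.exists_mulVec_eq_zero_iff] at h
  obtain ⟨x, hx, hx0⟩ := h
  refine ⟨x, hx, ?_⟩
  rw [Matrix.sub_mulVec, Algebra.algebraMap_eq_smul_one, Matrix.smul_mulVec,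
    Matrix.one_mulVec, sub_eq_zero] at hx0
  exact hx0.symm

open Finset in
theorem aux_randic_mulVec_sqrtdeg {V : Type*} [Fintype V] [DecidableEq V]
    (G : SimpleGraph V) [DecidableRel G.Adj]
    (hdegpos : ∀ u, 0 < G.degree u) :
    randic G *ᵥ (fun u => Real.sqrt (G.degree u)) = (fun u => Real.sqrt (G.degree u)) := by
  funext u
  have hdu : (0:ℝ) < (G.degree u : ℝ) := by exact_mod_cast hdegpos u
  have hsu : (0:ℝ) < Real.sqrt (G.degree u) := Real.sqrt_pos.2 hdu
  have key : ∀ v, (randic G) u v * Real.sqrt (G.degree v)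
      = if G.Adj u v then 1 / Real.sqrt (G.degree u) else 0 := by
    intro v
    by_cases hadj : G.Adj u v
    · have hdv : (0:ℝ) < (G.degree v : ℝ) := by exact_mod_cast hdegpos v
      have hsv : (0:ℝ) < Real.sqrt (G.degree v) := Real.sqrt_pos.2 hdv
      simp only [randic, hadj, if_true]
      rw [Real.sqrt_mul (le_of_lt hdu)]
      field_simp
    · simp [randic, hadj]
  simp only [mulVec, dotProduct]
  rw [Finset.sum_congr rfl (fun v _ => key v)]
  rw [← Finset.sum_filter]
  rw [Finset.sum_const, ← SimpleGraph.neighborFinset_eq_filter,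
    SimpleGraph.card_neighborFinset_eq_degree]
  rw [nsmul_eq_mul]
  rw [mul_one_div, div_eq_iff (ne_of_gt hsu), Real.mul_self_sqrt (le_of_lt hdu)]

open Finset in
theorem aux_randic_bound {V : Type*} [Fintype V] [DecidableEq V] [Nonempty V]
    (G : SimpleGraph V) [DecidableRel G.Adj]
    (hdegpos : ∀ u, 0 < G.degree u) {μ : ℝ} {x : V → ℝ} (hx : x ≠ 0)
    (hMx : randic G *ᵥ x = μ • x) : μ ≤ 1 := by
  classical
  have hd : ∀ u, (0:ℝ) < (G.degree u : ℝ) := fun u => by exact_mod_cast hdegpos u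
  have hs : ∀ u, (0:ℝ) < Real.sqrt (G.degree u) := fun u => Real.sqrt_pos.2 (hd u)
  set y : V → ℝ := fun u => x u / Real.sqrt (G.degree u) with hy
  obtain ⟨u₀, -, hmax⟩ := Finset.exists_max_image univ (fun u => |y u|) univ_nonempty
  have hy0 : 0 < |y u₀| := by
    obtain ⟨w, hw⟩ : ∃ w, x w ≠ 0 := Function.ne_iff.1 hx
    have hyw : y w ≠ 0 := div_ne_zero hw (ne_of_gt (hs w))
    exact lt_of_lt_of_le (abs_pos.2 hyw) (hmax w (mem_univ w))
  have heq : ∑ v, randic G u₀ v * x v = μ * x u₀ := by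
    have := congrFun hMx u₀
    simpa [mulVec, dotProduct] using this
  have habs : ∀ v, |randic G u₀ v * x v|
      ≤ (if G.Adj u₀ v then |y u₀| / Real.sqrt (G.degree u₀) else 0) := by
    intro v
    by_cases hadj : G.Adj u₀ v
    · simp only [randic, hadj, if_true]
      rw [abs_mul, abs_of_nonneg
        (by positivity : (0:ℝ) ≤ 1 / Real.sqrt ((G.degree u₀ : ℝ) * G.degree v))]
      rw [Real.sqrt_mul (le_of_lt (hd u₀))]
      have hxv : |x v| = |y v| * Real.sqrt (G.degree v) := by
        rw [hy]; simp only
        rw [abs_div, abs_of_nonneg (Real.sqrt_nonneg _), div_mul_cancel₀]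
        exact ne_of_gt (hs v)
      rw [hxv]
      have h1 : 1 / (Real.sqrt (G.degree u₀) * Real.sqrt (G.degree v))
          * (|y v| * Real.sqrt (G.degree v)) = |y v| / Real.sqrt (G.degree u₀) := by
        have ha := ne_of_gt (hs u₀)
        have hb := ne_of_gt (hs v)
        field_simp
      rw [h1]
      exact div_le_div_of_nonneg_right (hmax v (mem_univ v)) (hs u₀).le
    · simp [randic, hadj]
  have hXu : |x u₀| = |y u₀| * Real.sqrt (G.degree u₀) := by
    rw [hy]; simp only
    rw [abs_div, abs_of_nonneg (Real.sqrt_nonneg _), div_mul_cancel₀]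
    exact ne_of_gt (hs u₀)
  have hcalc : |μ| * |x u₀| ≤ |y u₀| * Real.sqrt (G.degree u₀) := by
    calc |μ| * |x u₀| = |μ * x u₀| := (abs_mul μ (x u₀)).symm
      _ = |∑ v, randic G u₀ v * x v| := by rw [heq]
      _ ≤ ∑ v, |randic G u₀ v * x v| := Finset.abs_sum_le_sum_abs _ _
      _ ≤ ∑ v, (if G.Adj u₀ v then |y u₀| / Real.sqrt (G.degree u₀) else 0) :=
          Finset.sum_le_sum (fun v _ => habs v)
      _ = (G.degree u₀ : ℝ) * (|y u₀| / Real.sqrt (G.degree u₀)) := by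
          rw [← Finset.sum_filter, Finset.sum_const, ← SimpleGraph.neighborFinset_eq_filter,
            SimpleGraph.card_neighborFinset_eq_degree, nsmul_eq_mul]
      _ = |y u₀| * Real.sqrt (G.degree u₀) := by
          have hne := ne_of_gt (hs u₀)
          rw [div_eq_mul_inv, ← mul_assoc, mul_comm ((G.degree u₀ : ℝ)) (|y u₀|), mul_assoc,
            mul_comm ((G.degree u₀ : ℝ))]
          congr 1
          rw [inv_mul_eq_div, Real.div_sqrt]
  rw [hXu] at hcalc
  have hpos : 0 < |y u₀| * Real.sqrt (G.degree u₀) := mul_pos hy0 (hs u₀)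
  have hμ1 : |μ| ≤ 1 := by
    have h1 : |μ| * (|y u₀| * Real.sqrt (G.degree u₀))
        ≤ 1 * (|y u₀| * Real.sqrt (G.degree u₀)) := by linarith
    exact le_of_mul_le_mul_right h1 hpos
  exact le_trans (le_abs_self μ) hμ1

theorem aux_step_down {V : Type*} {G : SimpleGraph V} {r : V}
    (hconn : G.Connected) (i : ℕ) (hi : ∃ v, G.dist r v = i + 1) :
    ∃ u, G.dist r u = i := by
  obtain ⟨v, hv⟩ := hi
  obtain ⟨p, hp⟩ := (hconn v r).exists_walk_length_eq_dist
  have hlen : p.length = i + 1 := by rw [hp, SimpleGraph.dist_comm, hv]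
  cases p with
  | nil => simp at hlen
  | @cons _ w _ a q =>
    refine ⟨w, le_antisymm ?_ ?_⟩
    · have := SimpleGraph.dist_le q.reverse
      rw [SimpleGraph.Walk.length_reverse] at this
      simp only [SimpleGraph.Walk.length_cons] at hlen
      omega
    · have htri : G.dist r v ≤ G.dist r w + G.dist w v := hconn.dist_triangle
      have hwv : G.dist w v ≤ 1 := by
        have := SimpleGraph.dist_le a.symm.toWalk
        simpa using this
      omega

theorem aux_neighbor_unique {V : Type*} [DecidableEq V] {G : SimpleGraph V} {r : V} {h : ℕ}
    (htree : G.IsTree) {vh : V}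
    (hvh : G.dist r vh = h) (hheight : ∀ v, G.dist r v ≤ h)
    {u₁ u₂ : V} (h1 : G.Adj vh u₁) (h2 : G.Adj vh u₂) : u₁ = u₂ := by
  have hconn := htree.isConnected
  have key : ∀ u : V, G.Adj vh u → ∃ P : G.Walk vh r, P.IsPath ∧ P.getVert 1 = u := by
    intro u hadj
    obtain ⟨p, hp⟩ := (hconn u r).exists_walk_length_eq_dist
    have hvnot : vh ∉ p.support := by
      intro hmem
      have hsplit : (p.takeUntil vh hmem).length + (p.dropUntil vh hmem).length = p.length := by
        rw [← SimpleGraph.Walk.length_append, SimpleGraph.Walk.take_spec]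
      have hta : G.dist u vh ≤ (p.takeUntil vh hmem).length := SimpleGraph.dist_le _
      have htb : G.dist vh r ≤ (p.dropUntil vh hmem).length := SimpleGraph.dist_le _
      have h4 : 1 ≤ G.dist u vh := (hconn u vh).pos_dist_of_ne hadj.ne'
      have h5 : G.dist vh r = h := by rw [SimpleGraph.dist_comm]; exact hvh
      have h6 : G.dist u r ≤ h := by rw [SimpleGraph.dist_comm]; exact hheight u
      omega
    have hbs : vh ∉ p.bypass.support :=
      fun hm => hvnot (SimpleGraph.Walk.support_bypass_subset _ hm)
    refine ⟨SimpleGraph.Walk.cons hadj p.bypass, ?_, ?_⟩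
    · exact (SimpleGraph.Walk.cons_isPath_iff _ _).2 ⟨p.bypass_isPath, hbs⟩
    · rw [SimpleGraph.Walk.getVert_cons_succ, SimpleGraph.Walk.getVert_zero]
  obtain ⟨P1, hP1, hg1⟩ := key u₁ h1
  obtain ⟨P2, hP2, hg2⟩ := key u₂ h2
  have : P1 = P2 := ((htree.existsUnique_path vh r).unique hP1 hP2 : _)
  rw [← hg1, ← hg2, this]

/-- The product of the level sizes times nothing: `levf m ℓ` is the number of vertices
at distance `h - ℓ`... (auxiliary product used to build the eigenvector of `Pmat`). -/
noncomputable def levf (m : ℕ → ℝ) : ℕ → ℝ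
  | 0 => 1
  | (ℓ+1) => levf m ℓ * (if ℓ = 0 then m 0 else m ℓ - 1)

section PmatEig
variable {h : ℕ} {m : ℕ → ℝ}

theorem levf_succ (m : ℕ → ℝ) (ℓ : ℕ) (hl : 1 ≤ ℓ) :
    levf m (ℓ + 1) = levf m ℓ * (m ℓ - 1) := by
  have : ℓ ≠ 0 := by omega
  simp [levf, this]

theorem levf_one (m : ℕ → ℝ) : levf m 1 = m 0 := by simp [levf]

theorem aux_L2' (hm0 : 2 ≤ m 0) (hm : ∀ i, 1 ≤ i → i ≤ h → 1 ≤ m i)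
    (ℓ : ℕ) (h1 : 1 ≤ ℓ) (h2 : ℓ + 1 ≤ h) :
    Real.sqrt ((m ℓ - 1) / (m (ℓ+1) * m ℓ)) * Real.sqrt (levf m ℓ * m ℓ)
      = Real.sqrt (levf m (ℓ+1) / m (ℓ+1)) := by
  have hl : 1 ≤ m ℓ := hm ℓ h1 (by omega)
  have hl1 : 1 ≤ m (ℓ+1) := hm (ℓ+1) (by omega) h2
  have hA : (0:ℝ) ≤ (m ℓ - 1) / (m (ℓ+1) * m ℓ) := by
    apply div_nonneg <;> nlinarith
  rw [← Real.sqrt_mul hA, levf_succ m ℓ h1]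
  congr 1
  field_simp

theorem aux_L1' (hm0 : 2 ≤ m 0) (hm : ∀ i, 1 ≤ i → i ≤ h → 1 ≤ m i)
    (ℓ : ℕ) (h1 : 1 ≤ ℓ) (h2 : ℓ + 1 ≤ h) :
    Real.sqrt ((m ℓ - 1) / (m (ℓ+1) * m ℓ)) * Real.sqrt (levf m (ℓ+1) * m (ℓ+1))
      = (m ℓ - 1) * Real.sqrt (levf m ℓ / m ℓ) := by
  have hl : 1 ≤ m ℓ := hm ℓ h1 (by omega)
  have hl1 : 1 ≤ m (ℓ+1) := hm (ℓ+1) (by omega) h2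
  have hA : (0:ℝ) ≤ (m ℓ - 1) / (m (ℓ+1) * m ℓ) := by
    apply div_nonneg <;> nlinarith
  have hB : (0:ℝ) ≤ m ℓ - 1 := by linarith
  rw [← Real.sqrt_mul hA, ← Real.sqrt_sq hB, ← Real.sqrt_mul (sq_nonneg _), Real.sqrt_sq hB]
  congr 1
  rw [levf_succ m ℓ h1]
  field_simp

theorem aux_L5' (hm0 : 2 ≤ m 0) (hm : ∀ i, 1 ≤ i → i ≤ h → 1 ≤ m i)
    (ℓ : ℕ) (h1 : 1 ≤ ℓ) (h2 : ℓ ≤ h) :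
    (m ℓ) * Real.sqrt (levf m ℓ / m ℓ) = Real.sqrt (levf m ℓ * m ℓ) := by
  have hl : 1 ≤ m ℓ := hm ℓ h1 h2
  have hB : (0:ℝ) ≤ m ℓ := by linarith
  rw [← Real.sqrt_sq hB, ← Real.sqrt_mul (sq_nonneg _), Real.sqrt_sq hB]
  congr 1
  field_simp

theorem aux_L4' (hm0 : 2 ≤ m 0) (hm : ∀ i, 1 ≤ i → i ≤ h → 1 ≤ m i) (hh : 1 ≤ h) :
    Real.sqrt (1 / m 1) * Real.sqrt (levf m 0 * m 0) = Real.sqrt (levf m 1 / m 1) := by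
  have hl : 1 ≤ m 1 := hm 1 le_rfl hh
  rw [← Real.sqrt_mul (by positivity : (0:ℝ) ≤ 1 / m 1), levf_one]
  congr 1
  simp [levf]
  field_simp

theorem aux_L3' (hm0 : 2 ≤ m 0) (hm : ∀ i, 1 ≤ i → i ≤ h → 1 ≤ m i) (hh : 1 ≤ h) :
    Real.sqrt (1 / m 1) * Real.sqrt (levf m 1 * m 1) = Real.sqrt (levf m 0 * m 0) := by
  have hl : 1 ≤ m 1 := hm 1 le_rfl hh
  rw [← Real.sqrt_mul (by positivity : (0:ℝ) ≤ 1 / m 1), levf_one]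
  congr 1
  simp [levf]
  field_simp

end PmatEig

open Finset in
theorem aux_pmat_one_mem (h : ℕ) (hh : 1 ≤ h) (m : ℕ → ℝ) (hm0 : 2 ≤ m 0)
    (hm : ∀ i, 1 ≤ i → i ≤ h → 1 ≤ m i) (hmh : m h = 1) :
    (1:ℝ) ∈ spectrum ℝ (Pmat h m (h+1)) := by
  set w : Fin (h+1) → ℝ := fun j => Real.sqrt (levf m (h - j.val) * m (h - j.val)) with hw
  have hwne : w ≠ 0 := by
    intro h0
    have := congrFun h0 ⟨h, by omega⟩
    simp only [hw, Pi.zero_apply] at this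
    rw [Nat.sub_self] at this
    have hm0pos : (0:ℝ) < levf m 0 * m 0 := by simp [levf]; linarith
    exact absurd this (ne_of_gt (Real.sqrt_pos.2 hm0pos))
  apply aux_mem_spectrum_of_mulVec _ hwne
  rw [one_smul]
  funext j
  simp only [mulVec, dotProduct, Pmat]
  rcases Nat.lt_or_ge 0 j.val with hj0 | hj0
  swap
  · -- j.val = 0
    have hj0' : j.val = 0 := by omega
    rw [Finset.sum_eq_single (⟨1, by omega⟩ : Fin (h+1))]
    · rw [if_pos (by simp [hj0'])]
      simp only [hw, hj0']
      obtain ⟨k, rfl⟩ : ∃ k, h = k + 1 := ⟨h - 1, by omega⟩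
      rcases Nat.eq_zero_or_pos k with rfl | hk
      · -- h = 1
        rw [odOne, if_pos rfl]
        have e1 : 1 - 1 = 0 := rfl
        rw [show (0+1) - 1 = 0 from rfl, Nat.sub_zero]
        have := aux_L4' (h := 1) hm0 hm le_rfl
        rw [this, hmh, div_one, mul_one]
      · -- h = k+1, k ≥ 1
        rw [odOne, if_neg (by omega)]
        rw [show k + 1 - 1 - 0 = k from by omega, show k + 1 - 0 = k + 1 from by omega,
          show k + 1 - 1 = k from by omega]
        rw [aux_L2' hm0 hm k hk le_rfl, hmh, div_one, mul_one]
    · intro b _ hb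
      have hb1 : b.val ≠ 1 := fun e => hb (Fin.ext (by simp only [Fin.val_mk]; omega))
      rw [if_neg (by omega), if_neg (by omega), zero_mul]
    · intro hmem; exact absurd (Finset.mem_univ _) hmem
  rcases Nat.lt_or_ge j.val h with hjh | hjh
  swap
  · -- j.val = h
    have hjh' : j.val = h := by omega
    rw [Finset.sum_eq_single (⟨h - 1, by omega⟩ : Fin (h+1))]
    · rw [if_neg (by simp only [Fin.val_mk]; omega), if_pos (by simp only [Fin.val_mk]; omega)]
      simp only [hw, hjh']
      rw [odOne, if_pos (by omega)]
      rw [show h - (h - 1) = 1 from by omega, Nat.sub_self]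
      exact aux_L3' hm0 hm hh
    · intro b _ hb
      have hb1 : b.val ≠ h - 1 := fun e => hb (Fin.ext (by simp only [Fin.val_mk]; omega))
      have hbl : b.val < h + 1 := b.isLt
      rw [if_neg (by omega), if_neg (by omega), zero_mul]
    · intro hmem; exact absurd (Finset.mem_univ _) hmem
  · -- 0 < j.val < h
    obtain ⟨K, hK⟩ : ∃ K, j.val = K + 1 := ⟨j.val - 1, by omega⟩
    obtain ⟨ℓ, hℓ⟩ : ∃ ℓ, h = j.val + ℓ := ⟨h - j.val, by omega⟩
    have hℓ1 : 1 ≤ ℓ := by omega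
    set b₁ : Fin (h+1) := ⟨K, by omega⟩ with hb₁
    set b₂ : Fin (h+1) := ⟨K + 2, by omega⟩ with hb₂
    have hpair : ∀ b : Fin (h+1), b ∉ ({b₁, b₂} : Finset (Fin (h+1))) →
        (if j.val + 1 = b.val then odOne h m j.val
          else if b.val + 1 = j.val then odOne h m b.val else 0) * w b = 0 := by
      intro b hb
      simp only [Finset.mem_insert, Finset.mem_singleton] at hb
      push_neg at hb
      obtain ⟨hbne1, hbne2⟩ := hb
      have h1 : b.val ≠ K := fun e => hbne1 (Fin.ext (by rw [hb₁]; exact e))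
      have h2 : b.val ≠ K + 2 := fun e => hbne2 (Fin.ext (by rw [hb₂]; exact e))
      rw [if_neg (by omega), if_neg (by omega), zero_mul]
    have hsum : ∑ b : Fin (h+1), (if j.val + 1 = b.val then odOne h m j.val
          else if b.val + 1 = j.val then odOne h m b.val else 0) * w b
        = ∑ b ∈ ({b₁, b₂} : Finset (Fin (h+1))),
            (if j.val + 1 = b.val then odOne h m j.val
              else if b.val + 1 = j.val then odOne h m b.val else 0) * w b := by
      refine (Finset.sum_subset (Finset.subset_univ _) ?_).symm
      intro b _ hb
      exact hpair b hb
    rw [hsum, Finset.sum_pair (by simp only [hb₁, hb₂, ne_eq, Fin.mk.injEq]; omega)]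
    rw [if_neg (by simp only [hb₁, Fin.val_mk]; omega),
      if_pos (by simp only [hb₁, Fin.val_mk]; omega),
      if_pos (by simp only [hb₂, Fin.val_mk]; omega)]
    simp only [hw, hb₁, hb₂, Fin.val_mk]
    rw [odOne, if_neg (by omega)]
    rw [show h - 1 - K = ℓ from by omega, show h - K = ℓ + 1 from by omega]
    have ht1 : Real.sqrt ((m ℓ - 1) / (m (ℓ+1) * m ℓ)) * Real.sqrt (levf m (ℓ+1) * m (ℓ+1))
        = (m ℓ - 1) * Real.sqrt (levf m ℓ / m ℓ) := aux_L1' hm0 hm ℓ hℓ1 (by omega)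
    have ht2 : odOne h m j.val * Real.sqrt (levf m (h - (K + 2)) * m (h - (K + 2)))
        = Real.sqrt (levf m ℓ / m ℓ) := by
      rcases Nat.eq_or_lt_of_le hℓ1 with h1 | h2
      · -- ℓ = 1, j.val + 1 = h
        rw [odOne, if_pos (by omega), show h - (K + 2) = 0 from by omega, ← h1]
        rw [← h1] at *
        exact aux_L4' hm0 hm hh
      · -- ℓ ≥ 2
        obtain ⟨t, rfl⟩ : ∃ t, ℓ = t + 1 := ⟨ℓ - 1, by omega⟩
        have ht : 1 ≤ t := by omega
        rw [odOne, if_neg (by omega), show h - 1 - j.val = t from by omega,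
          show h - j.val = t + 1 from by omega, show h - (K + 2) = t from by omega]
        exact aux_L2' hm0 hm t ht (by omega)
    rw [ht1, ht2, show h - j.val = ℓ from by omega]
    have := aux_L5' hm0 hm ℓ hℓ1 (by omega)
    nlinarith [this]

theorem stmt13 {V : Type*} [Fintype V] [DecidableEq V]
    (G : SimpleGraph V) [DecidableRel G.Adj] (r : V) (h : ℕ) (m : ℕ → ℕ)
    (hh : 1 ≤ h) (hm0 : 2 ≤ m 0)
    (htree : G.IsTree)
    (hheight : ∀ v, G.dist r v ≤ h)
    (hmax : ∃ v, G.dist r v = h)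
    (hdeg : ∀ v, G.degree v = m (G.dist r v)) :
    IsGreatest (spectrum ℝ (randic G)) 1 ∧
    (1 : ℝ) ∈ spectrum ℝ (Pmat h (fun i => (m i : ℝ)) (h + 1)) := by
  obtain ⟨vh, hvh⟩ := hmax
  have hconn := htree.isConnected
  have _ : Nonempty V := ⟨r⟩
  have hne : vh ≠ r := by
    intro e
    rw [e, SimpleGraph.dist_self] at hvh
    omega
  have hadj_ex : ∀ u, ∃ t, G.Adj u t := by
    intro u
    rcases eq_or_ne u vh with rfl | hne'
    · obtain ⟨p⟩ := hconn.preconnected u r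
      cases p with
      | nil => exact absurd rfl hne
      | cons a q => exact ⟨_, a⟩
    · obtain ⟨p⟩ := hconn.preconnected u vh
      cases p with
      | nil => exact absurd rfl hne'
      | cons a q => exact ⟨_, a⟩
  have hdegpos : ∀ u, 0 < G.degree u := fun u =>
    (G.degree_pos_iff_exists_adj u).2 (hadj_ex u)
  -- first part
  have part1 : IsGreatest (spectrum ℝ (randic G)) 1 := by
    constructor
    · have hxne : (fun u => Real.sqrt (G.degree u)) ≠ (0 : V → ℝ) := by
        intro h0
        have := congrFun h0 r
        simp only [Pi.zero_apply] at this
        have : (0:ℝ) < Real.sqrt (G.degree r) :=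
          Real.sqrt_pos.2 (by exact_mod_cast hdegpos r)
        simp_all
      exact aux_mem_spectrum_of_mulVec (randic G) hxne
        (by rw [aux_randic_mulVec_sqrtdeg G hdegpos, one_smul])
    · intro μ hμ
      obtain ⟨x, hx, hMx⟩ := aux_exists_mulVec_of_mem_spectrum hμ
      exact aux_randic_bound G hdegpos hx hMx
  refine ⟨part1, ?_⟩
  -- levels
  have hlev0 : ∀ k, k ≤ h → ∃ v, G.dist r v = h - k := by
    intro k
    induction k with
    | zero => intro _; exact ⟨vh, by simpa using hvh⟩
    | succ n ih =>
      intro hk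
      have h1 := ih (by omega)
      have e : h - n = (h - (n+1)) + 1 := by omega
      rw [e] at h1
      exact aux_step_down hconn _ h1
  have hm1 : ∀ i, 1 ≤ i → i ≤ h → (1:ℝ) ≤ ((fun i => (m i : ℝ)) i) := by
    intro i hi1 hih
    obtain ⟨v, hv⟩ := hlev0 (h - i) (by omega)
    rw [show h - (h - i) = i from by omega] at hv
    have hp : 0 < G.degree v := hdegpos v
    rw [hdeg v, hv] at hp
    simp only
    exact_mod_cast hp
  have hdeg1 : G.degree vh = 1 := by
    have hpos := hdegpos vh
    have hle : G.degree vh ≤ 1 := by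
      apply Finset.card_le_one.2
      intro a ha b hb
      rw [SimpleGraph.mem_neighborFinset] at ha hb
      exact aux_neighbor_unique htree hvh hheight ha hb
    omega
  have hmh : m h = 1 := by
    rw [← hvh, ← hdeg vh, hdeg1]
  exact aux_pmat_one_mem h hh (fun i => (m i : ℝ)) (by exact_mod_cast hm0) hm1
    (by exact_mod_cast hmh)
end

section
/- Let T^2_{m_0,m_1,…,m_{h−1}} be a level-wise regular tree with two roots. Then the largest eigenvalue of the Randić matrix R(T^2) equals 1, and 1 is an eigenvalue of the matrix P^2_{h+1}. -/
set_option linter.unusedSectionVars false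
set_option maxHeartbeats 1000000

open Matrix

/-- The off-diagonal entry of the tridiagonal matrices `P^z_{h+1}` at (0-indexed)
position `(i, i+1)`. -/
noncomputable def odTwo (h : ℕ) (m : ℕ → ℝ) (i : ℕ) : ℝ :=
  Real.sqrt ((m (h - 1 - i) - 1) / (m (h - i) * m (h - 1 - i)))

/-- The `(h+1) × (h+1)` symmetric tridiagonal matrix `P^z_{h+1}`, `z = 1, 2`. -/
noncomputable def Pz (h : ℕ) (m : ℕ → ℝ) (z : ℕ) : Matrix (Fin (h + 1)) (Fin (h + 1)) ℝ :=
  fun a b =>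
    if a.val + 1 = b.val then odTwo h m a.val
    else if b.val + 1 = a.val then odTwo h m b.val
    else if a = b ∧ a.val = h then (-1 : ℝ) ^ z / m 0
    else 0

section RandicLemmas
open Finset
variable {V : Type*} [Fintype V] [DecidableEq V] (G : SimpleGraph V) [DecidableRel G.Adj]


lemma randic_mulVec_eq (x : V → ℝ) (u : V) :
    (randic G).mulVec x u = ∑ v ∈ G.neighborFinset u,
      x v / (Real.sqrt (G.degree u) * Real.sqrt (G.degree v)) := by
  rw [mulVec, dotProduct]
  rw [SimpleGraph.neighborFinset_eq_filter, sum_filter]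
  congr 1; ext v
  by_cases hadj : G.Adj u v
  · simp [randic, hadj, Real.sqrt_mul (by positivity : (0:ℝ) ≤ (G.degree u : ℝ))]
    ring
  · simp [randic, hadj]

lemma randic_fixed : (randic G).mulVec (fun v => Real.sqrt (G.degree v))
    = fun v => Real.sqrt (G.degree v) := by
  funext u
  rw [randic_mulVec_eq]
  have : ∀ v ∈ G.neighborFinset u,
      Real.sqrt (G.degree v) / (Real.sqrt (G.degree u) * Real.sqrt (G.degree v))
      = 1 / Real.sqrt (G.degree u) := by
    intro v hv
    rw [SimpleGraph.mem_neighborFinset] at hv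
    have hdv : 0 < G.degree v := by
      rw [G.degree_pos_iff_exists_adj]; exact ⟨u, hv.symm⟩
    have hnv : Real.sqrt (G.degree v) ≠ 0 := by positivity
    rw [mul_comm, ← div_div, div_self hnv]
  rw [Finset.sum_congr rfl this, Finset.sum_const, SimpleGraph.card_neighborFinset_eq_degree]
  rw [nsmul_eq_mul, mul_one_div, Real.div_sqrt]

lemma randic_bound (hd : ∀ v, 0 < G.degree v) {μ : ℝ} (x : V → ℝ) (hx : x ≠ 0)
    (heig : (randic G).mulVec x = μ • x) : |μ| ≤ 1 := by
  set z : V → ℝ := fun v => x v / Real.sqrt (G.degree v) with hz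
  have hVne : Nonempty V := by
    by_contra hV
    exact hx (funext fun v => absurd ⟨v⟩ hV)
  obtain ⟨u, -, hu⟩ := Finset.exists_max_image (univ : Finset V) (fun v => |z v|) ⟨Classical.arbitrary V, mem_univ _⟩
  have hzu : 0 < |z u| := by
    obtain ⟨w, hw⟩ : ∃ w, x w ≠ 0 := by
      by_contra hc; push_neg at hc; exact hx (funext hc)
    have hzw : z w ≠ 0 := by
      have : Real.sqrt (G.degree w) ≠ 0 := by have := hd w; positivity
      simp [hz, div_eq_zero_iff, hw, this]
    calc 0 < |z w| := abs_pos.2 hzw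
    _ ≤ |z u| := hu w (mem_univ w)
  -- key equation at u
  have hsqu : Real.sqrt (G.degree u) ≠ 0 := by have := hd u; positivity
  have key : μ * z u * (G.degree u) = ∑ v ∈ G.neighborFinset u, z v := by
    have h1 := congrFun heig u
    rw [randic_mulVec_eq] at h1
    have h2 : ∀ v ∈ G.neighborFinset u,
        x v / (Real.sqrt (G.degree u) * Real.sqrt (G.degree v))
        = z v / Real.sqrt (G.degree u) := by
      intro v hv; rw [hz]; ring
    rw [Finset.sum_congr rfl h2, ← Finset.sum_div] at h1
    have h3 : x u = z u * Real.sqrt (G.degree u) := by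
      rw [hz]; field_simp
    rw [Pi.smul_apply, smul_eq_mul, h3] at h1
    have := congrArg (· * Real.sqrt (G.degree u)) h1
    simp only [div_mul_cancel₀ _ hsqu] at this
    have hds : Real.sqrt (G.degree u) * Real.sqrt (G.degree u) = (G.degree u : ℝ) :=
      Real.mul_self_sqrt (by positivity)
    rw [this]; linear_combination (-(μ * z u)) * hds
  have hbound : |μ| * |z u| * (G.degree u) ≤ |z u| * (G.degree u) := by
    calc |μ| * |z u| * (G.degree u) = |μ * z u * (G.degree u)| := by
          rw [abs_mul, abs_mul]; congr 1
          exact (abs_of_nonneg (by positivity : (0:ℝ) ≤ (G.degree u : ℝ))).symm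
    _ = |∑ v ∈ G.neighborFinset u, z v| := by rw [key]
    _ ≤ ∑ v ∈ G.neighborFinset u, |z v| := Finset.abs_sum_le_sum_abs _ _
    _ ≤ ∑ v ∈ G.neighborFinset u, |z u| := Finset.sum_le_sum (fun v _ => hu v (mem_univ v))
    _ = |z u| * (G.degree u) := by
          rw [Finset.sum_const, SimpleGraph.card_neighborFinset_eq_degree, nsmul_eq_mul]; ring
  have hdu : (0:ℝ) < (G.degree u : ℝ) := by exact_mod_cast hd u
  have hX : 0 < |z u| * (G.degree u : ℝ) := mul_pos hzu hdu
  rw [mul_assoc] at hbound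
  have h6 : |μ| * (|z u| * (G.degree u : ℝ)) ≤ 1 * (|z u| * (G.degree u : ℝ)) := by
    rw [one_mul]; linarith
  exact le_of_mul_le_mul_right h6 hX

end RandicLemmas

section PzEig
open Finset

lemma mem_spectrum_iff_eig {n : Type*} [Fintype n] [DecidableEq n] (M : Matrix n n ℝ) (μ : ℝ) :
    μ ∈ spectrum ℝ M ↔ ∃ x : n → ℝ, x ≠ 0 ∧ M.mulVec x = μ • x := by
  rw [← AlgEquiv.spectrum_eq (Matrix.toLinAlgEquiv' (R := ℝ) (n := n)),
    ← Module.End.hasEigenvalue_iff_mem_spectrum]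
  rw [Module.End.hasEigenvalue_iff, Submodule.ne_bot_iff]
  constructor
  · rintro ⟨x, hx, hx0⟩
    rw [Module.End.mem_eigenspace_iff, Matrix.toLinAlgEquiv'_apply] at hx
    exact ⟨x, hx0, hx⟩
  · rintro ⟨x, hx0, hx⟩
    refine ⟨x, ?_, hx0⟩
    rw [Module.End.mem_eigenspace_iff, Matrix.toLinAlgEquiv'_apply]
    exact hx

lemma pz_eig (h : ℕ) (m : ℕ → ℝ) (hh : 1 ≤ h)
    (hm2 : ∀ i, i < h → 2 ≤ m i) (hmh : m h = 1) :
    (1 : ℝ) ∈ spectrum ℝ (Pz h m 2) := by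
  classical
  -- positivity facts
  have hmpos : ∀ i, i ≤ h → 0 < m i := by
    intro i hi
    rcases eq_or_lt_of_le hi with rfl | hi'
    · rw [hmh]; norm_num
    · linarith [hm2 i hi']
  set nn : ℕ → ℝ := fun ℓ => 2 * ∏ i ∈ Finset.range ℓ, (m i - 1) with hnn
  have hnnpos : ∀ ℓ, ℓ ≤ h → 0 < nn ℓ := by
    intro ℓ hℓ
    have : 0 < ∏ i ∈ Finset.range ℓ, (m i - 1) := by
      apply Finset.prod_pos
      intro i hi
      rw [Finset.mem_range] at hi
      linarith [hm2 i (lt_of_lt_of_le hi hℓ)]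
    rw [hnn]; positivity
  have hnnsucc : ∀ ℓ, nn (ℓ + 1) = nn ℓ * (m ℓ - 1) := by
    intro ℓ
    rw [hnn]
    simp only [Finset.prod_range_succ]
    ring
  set x : Fin (h + 1) → ℝ := fun a => Real.sqrt (nn (h - a.val) * m (h - a.val)) with hx
  rw [mem_spectrum_iff_eig]
  refine ⟨x, ?_, ?_⟩
  · intro hx0
    have h0 : x ⟨h, by omega⟩ = 0 := by rw [hx0]; rfl
    rw [hx] at h0
    simp only [Nat.sub_self] at h0
    have : (0:ℝ) < nn 0 * m 0 := mul_pos (hnnpos 0 (by omega)) (hmpos 0 (by omega))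
    rw [Real.sqrt_eq_zero (le_of_lt this)] at h0
    linarith
  · rw [one_smul]
    funext a
    rw [mulVec, dotProduct]
    -- three cases on a
    rcases lt_trichotomy a.val h with hah | hah | hah
    · rcases Nat.eq_zero_or_pos a.val with ha0 | hapos
      · -- a = 0 : single term at b = 1
        have hmem : (⟨1, by omega⟩ : Fin (h+1)) ∈ (univ : Finset (Fin (h+1))) := mem_univ _
        rw [Finset.sum_eq_single_of_mem _ hmem ?side]
        case side =>
          intro c _ hc
          have hc1 : c.val ≠ 1 := by
            intro hcv; exact hc (Fin.ext hcv)
          have : Pz h m 2 a c = 0 := by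
            rw [Pz]
            simp only [ha0]
            rw [if_neg (by omega), if_neg (by omega), if_neg ?_]
            rintro ⟨rfl, hd⟩
            omega
          rw [this, zero_mul]
        -- main identity
        have hP : Pz h m 2 a ⟨1, by omega⟩ = odTwo h m 0 := by
          rw [Pz]; simp [ha0]
        rw [hP, hx]
        simp only [ha0]
        rw [odTwo]
        have e1 : h - 1 - 0 = h - 1 := by omega
        have e2 : h - 0 = h := by omega
        rw [e1, e2, hmh]
        have hm1pos : 0 < m (h-1) := hmpos _ (by omega)
        have hnum : (0:ℝ) ≤ (m (h - 1) - 1) / (1 * m (h - 1)) := by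
          have := hm2 (h-1) (by omega)
          apply div_nonneg <;> linarith
        rw [← Real.sqrt_mul hnum]
        congr 1
        have : nn h = nn (h-1) * (m (h-1) - 1) := by
          have := hnnsucc (h-1)
          rwa [Nat.sub_add_cancel hh] at this
        rw [this]
        field_simp
      · -- interior : two terms
        set ℓ := h - 1 - a.val with hℓ
        have hl1 : h - a.val = ℓ + 1 := by omega
        have hl2 : h - (a.val - 1) = ℓ + 2 := by omega
        have hl3 : h - (a.val + 1) = ℓ := by omega
        have hb1 : (⟨a.val + 1, by omega⟩ : Fin (h+1)) ∈ (univ : Finset (Fin (h+1))) := mem_univ _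
        have hb2 : (⟨a.val - 1, by omega⟩ : Fin (h+1)) ∈ (univ : Finset (Fin (h+1))) := mem_univ _
        have hne : (⟨a.val + 1, by omega⟩ : Fin (h+1)) ≠ ⟨a.val - 1, by omega⟩ := by
          simp only [ne_eq, Fin.mk.injEq]; omega
        rw [Finset.sum_eq_add_of_mem _ _ hb1 hb2 hne ?side]
        case side =>
          intro c _ hc
          obtain ⟨hc1, hc2⟩ := hc
          have hc1' : c.val ≠ a.val + 1 := fun hv => hc1 (Fin.ext hv)
          have hc2' : c.val ≠ a.val - 1 := fun hv => hc2 (Fin.ext hv)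
          have : Pz h m 2 a c = 0 := by
            rw [Pz]
            rw [if_neg (by omega), if_neg (by omega), if_neg ?_]
            rintro ⟨rfl, hd⟩
            omega
          rw [this, zero_mul]
        have hP1 : Pz h m 2 a ⟨a.val + 1, by omega⟩ = odTwo h m a.val := by
          rw [Pz]; simp
        have hP2 : Pz h m 2 a ⟨a.val - 1, by omega⟩ = odTwo h m (a.val - 1) := by
          rw [Pz]
          rw [if_neg (show ¬(a.val + 1 = a.val - 1) by omega),
            if_pos (show a.val - 1 + 1 = a.val by omega)]
        rw [hP1, hP2, hx]
        simp only []
        have eb : h - 1 - (a.val - 1) = ℓ + 1 := by omega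
        rw [odTwo, odTwo, hl1, hl2, hl3, eb]
        -- now pure sqrt algebra
        have hm0' : 2 ≤ m ℓ := hm2 ℓ (by omega)
        have hm1' : 0 < m (ℓ+1) := hmpos _ (by omega)
        have hm1'' : 1 ≤ m (ℓ+1) := by
          rcases eq_or_lt_of_le (show ℓ + 1 ≤ h by omega) with he | hlt
          · rw [he, hmh]
          · linarith [hm2 (ℓ+1) hlt]
        have hm2' : 0 < m (ℓ+2) := hmpos _ (by omega)
        have hn0 : 0 < nn ℓ := hnnpos _ (by omega)
        have hn1 : 0 < nn (ℓ+1) := hnnpos _ (by omega)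
        set s := Real.sqrt (nn (ℓ+1) / m (ℓ+1)) with hs
        have e1 : Real.sqrt ((m ℓ - 1) / (m (ℓ+1) * m ℓ)) * Real.sqrt (nn ℓ * m ℓ) = s := by
          rw [← Real.sqrt_mul (div_nonneg (by linarith) (by positivity))]
          congr 1
          rw [hnnsucc ℓ]
          field_simp
        have e2 : Real.sqrt ((m (ℓ+1) - 1) / (m (ℓ+2) * m (ℓ+1))) * Real.sqrt (nn (ℓ+2) * m (ℓ+2))
            = (m (ℓ+1) - 1) * s := by
          rw [← Real.sqrt_mul (div_nonneg (by linarith) (by positivity))]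
          have : (m (ℓ+1) - 1) / (m (ℓ+2) * m (ℓ+1)) * (nn (ℓ+2) * m (ℓ+2))
              = (m (ℓ+1) - 1)^2 * (nn (ℓ+1) / m (ℓ+1)) := by
            rw [hnnsucc (ℓ+1)]
            field_simp
          rw [this, Real.sqrt_mul (by positivity), Real.sqrt_sq (by linarith)]
        have e3 : Real.sqrt (nn (ℓ+1) * m (ℓ+1)) = m (ℓ+1) * s := by
          have : nn (ℓ+1) * m (ℓ+1) = (m (ℓ+1))^2 * (nn (ℓ+1) / m (ℓ+1)) := by
            field_simp
          rw [this, Real.sqrt_mul (by positivity), Real.sqrt_sq (by linarith)]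
        rw [e1, e2, e3]
        ring
    · -- a.val = h : diagonal row
      have hb1 : (⟨h - 1, by omega⟩ : Fin (h+1)) ∈ (univ : Finset (Fin (h+1))) := mem_univ _
      have hamem : a ∈ (univ : Finset (Fin (h+1))) := mem_univ _
      have hne : (⟨h - 1, by omega⟩ : Fin (h+1)) ≠ a := by
        simp only [ne_eq, Fin.ext_iff]; omega
      rw [Finset.sum_eq_add_of_mem _ _ hb1 hamem hne ?side]
      case side =>
        intro c _ hc
        obtain ⟨hc1, hc2⟩ := hc
        have hc1' : c.val ≠ h - 1 := fun hv => hc1 (Fin.ext hv)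
        have hc2' : c.val ≠ a.val := fun hv => hc2 (Fin.ext (by omega))
        have : Pz h m 2 a c = 0 := by
          rw [Pz]
          rw [if_neg (by omega), if_neg (by omega), if_neg ?_]
          rintro ⟨rfl, hd⟩
          omega
        rw [this, zero_mul]
      have hP1 : Pz h m 2 a ⟨h - 1, by omega⟩ = odTwo h m (h - 1) := by
        rw [Pz]
        rw [if_neg (show ¬(a.val + 1 = h - 1) by omega),
          if_pos (show h - 1 + 1 = a.val by omega)]
      have hP2 : Pz h m 2 a a = 1 / m 0 := by
        rw [Pz]
        rw [if_neg (by omega), if_neg (by omega), if_pos ⟨rfl, hah⟩]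
        norm_num
      rw [hP1, hP2, hx]
      simp only [hah]
      rw [odTwo]
      have ea : h - 1 - (h-1) = 0 := by omega
      have eb : h - (h-1) = 1 := by omega
      have ecc : h - h = 0 := by omega
      rw [ea, eb, ecc]
      have hm00 : 2 ≤ m 0 := hm2 0 (by omega)
      have hm1p : 0 < m 1 := hmpos 1 (by omega)
      have hnn0 : nn 0 = 2 := by rw [hnn]; simp
      have hnn1 : nn 1 = 2 * (m 0 - 1) := by
        have := hnnsucc 0
        rw [hnn0] at this
        simpa using this
      set s := Real.sqrt (2 / m 0) with hs
      have e1 : Real.sqrt ((m 0 - 1) / (m 1 * m 0)) * Real.sqrt (nn 1 * m 1) = (m 0 - 1) * s := by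
        rw [← Real.sqrt_mul (div_nonneg (by linarith) (by positivity))]
        have : (m 0 - 1) / (m 1 * m 0) * (nn 1 * m 1) = (m 0 - 1)^2 * (2 / m 0) := by
          rw [hnn1]
          field_simp
        rw [this, Real.sqrt_mul (by positivity), Real.sqrt_sq (by linarith)]
      have e3 : Real.sqrt (nn 0 * m 0) = m 0 * s := by
        rw [hnn0]
        have : 2 * m 0 = (m 0)^2 * (2 / m 0) := by field_simp
        rw [this, Real.sqrt_mul (by positivity), Real.sqrt_sq (by linarith)]
      rw [e1, e3]
      have hm0ne : m 0 ≠ 0 := by linarith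
      field_simp
      ring
    · omega

end PzEig

section TreeAux
open SimpleGraph


section GraphAux
variable {V : Type*} [DecidableEq V] {G : SimpleGraph V}

lemma myLength_drop {u v : V} (p : G.Walk u v) (n : ℕ) :
    (p.drop n).length = p.length - n := by
  induction p generalizing n with
  | nil => cases n <;> simp [Walk.drop]
  | cons h q ih =>
    cases n with
    | zero => simp [Walk.drop]
    | succ n => simpa [Walk.drop] using ih n

lemma path_len (ht : G.IsTree) {a b : V} (p : G.Walk a b) (hp : p.IsPath) :
    p.length = G.dist a b := by
  obtain ⟨w, hw⟩ := ht.isConnected.exists_walk_length_eq_dist a b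
  have h1 : w.bypass.IsPath := Walk.bypass_isPath w
  have h2 := (ht.existsUnique_path a b).unique hp h1
  have e1 : w.bypass.length ≤ G.dist a b := hw ▸ Walk.length_bypass_le w
  have e2 : G.dist a b ≤ p.length := SimpleGraph.dist_le p
  rw [h2] at e2 ⊢; omega

lemma dist_path (ht : G.IsTree) (a b : V) :
    ∃ p : G.Walk a b, p.IsPath ∧ p.length = G.dist a b := by
  obtain ⟨w, _⟩ := ht.isConnected.exists_walk_length_eq_dist a b
  exact ⟨w.bypass, Walk.bypass_isPath w, path_len ht _ (Walk.bypass_isPath w)⟩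

lemma isPath_concat {a b c : V} {p : G.Walk a b} (hp : p.IsPath) (h : G.Adj b c)
    (hc : c ∉ p.support) : (p.concat h).IsPath := by
  rw [← Walk.isPath_reverse_iff, Walk.reverse_concat]
  refine Walk.IsPath.cons hp.reverse ?_
  simpa [Walk.support_reverse] using hc

lemma adj_dist (ht : G.IsTree) {a b : V} (hab : G.Adj a b) (v : V) :
    G.dist v a = G.dist v b + 1 ∨ G.dist v b = G.dist v a + 1 := by
  obtain ⟨p, hp, hlen⟩ := dist_path ht v a
  by_cases hb : b ∈ p.support
  · left
    have hsplit := congrArg Walk.length (p.take_spec hb)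
    rw [Walk.length_append] at hsplit
    have htake : (p.takeUntil b hb).length = G.dist v b := path_len ht _ (hp.takeUntil hb)
    have hdrop : (p.dropUntil b hb).length = G.dist b a := path_len ht _ (hp.dropUntil hb)
    have hba : G.dist b a = 1 := SimpleGraph.dist_eq_one_iff_adj.2 hab.symm
    omega
  · right
    have hq : (p.concat hab).IsPath := isPath_concat hp hab hb
    have h2 := path_len ht _ hq
    rw [Walk.length_concat] at h2
    omega

lemma dist_getVert (ht : G.IsTree) {a b : V} (p : G.Walk a b) (hlen : p.length = G.dist a b)
    {n : ℕ} (hn : n ≤ p.length) :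
    G.dist a (p.getVert n) = n ∧ G.dist (p.getVert n) b = p.length - n := by
  have h1 : G.dist (p.getVert n) b ≤ p.length - n := by
    have := SimpleGraph.dist_le (p.drop n)
    rwa [myLength_drop] at this
  have h2 : G.dist a (p.getVert n) ≤ n := by
    have := SimpleGraph.dist_le (p.reverse.drop (p.length - n))
    rw [myLength_drop, Walk.length_reverse, Walk.getVert_reverse] at this
    have hnn : p.length - (p.length - n) = n := by omega
    rw [hnn, G.dist_comm] at this
    omega
  have h3 := ht.isConnected.dist_triangle (u := a) (v := p.getVert n) (w := b)
  constructor <;> omega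

end GraphAux

section DegLemmas
variable {V : Type*} [Fintype V] [DecidableEq V] {G : SimpleGraph V} [DecidableRel G.Adj]

lemma interior_deg (ht : G.IsTree) {r r' v : V} {h : ℕ}
    (hv1 : G.dist r v = h) (hv2 : h ≤ G.dist r' v) {n : ℕ} (h1 : 1 ≤ n) (h2 : n < h) :
    ∃ u, G.dist r u = n ∧ n ≤ G.dist r' u ∧ 2 ≤ G.degree u := by
  obtain ⟨p, hp, hlen0⟩ := dist_path ht r v
  have hlen : p.length = h := hlen0.trans hv1
  refine ⟨p.getVert n, ?_, ?_, ?_⟩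
  · exact (dist_getVert ht p hlen0 (by omega)).1
  · have hd2 := (dist_getVert ht p hlen0 (n := n) (by omega)).2
    have htri := ht.isConnected.dist_triangle (u := r') (v := p.getVert n) (w := v)
    omega
  · have ha1 : G.Adj (p.getVert (n-1)) (p.getVert n) := by
      have := p.adj_getVert_succ (show n - 1 < p.length by omega)
      rwa [show n - 1 + 1 = n by omega] at this
    have ha2 : G.Adj (p.getVert n) (p.getVert (n+1)) :=
      p.adj_getVert_succ (by omega)
    have hw1 : G.dist r (p.getVert (n-1)) = n - 1 :=
      (dist_getVert ht p hlen0 (by omega)).1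
    have hw2 : G.dist r (p.getVert (n+1)) = n + 1 :=
      (dist_getVert ht p hlen0 (by omega)).1
    have hne : p.getVert (n-1) ≠ p.getVert (n+1) := by
      intro he; rw [he] at hw1; omega
    have hcard : 1 < (G.neighborFinset (p.getVert n)).card := by
      rw [Finset.one_lt_card]
      exact ⟨p.getVert (n-1), by rwa [SimpleGraph.mem_neighborFinset, adj_comm],
        p.getVert (n+1), by rwa [SimpleGraph.mem_neighborFinset], hne⟩
    rwa [SimpleGraph.card_neighborFinset_eq_degree] at hcard

lemma leaf_deg (ht : G.IsTree) {r r' v : V} (hadj : G.Adj r r') {h : ℕ} (hh : 1 ≤ h)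
    (hheight : ∀ u, min (G.dist r u) (G.dist r' u) ≤ h)
    (hv1 : G.dist r v = h) (hv2 : h ≤ G.dist r' v) : G.degree v = 1 := by
  obtain ⟨p, hp, hlen0⟩ := dist_path ht r v
  have hlen : p.length = h := hlen0.trans hv1
  have hadju0 : G.Adj (p.getVert (h-1)) v := by
    have := p.adj_getVert_succ (show h - 1 < p.length by omega)
    rwa [show h - 1 + 1 = p.length by omega, Walk.getVert_length] at this
  have hkey : ∀ w, G.Adj v w → w = p.getVert (h-1) := by
    intro w hw
    rcases adj_dist ht hw r with hcase | hcase
    · -- dist r w = h - 1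
      have hdw : G.dist r w = h - 1 := by omega
      obtain ⟨q, hq, hqlen0⟩ := dist_path ht r w
      have hqlen : q.length = h - 1 := by omega
      have hvns : v ∉ q.support := by
        intro hvs
        have e1 := Walk.length_takeUntil_le q hvs
        have e2 := path_len ht _ (hq.takeUntil hvs)
        omega
      have hc : (q.concat hw.symm).IsPath := isPath_concat hq hw.symm hvns
      have heq := (ht.existsUnique_path r v).unique hc hp
      have hgv : (q.concat hw.symm).getVert (h-1) = w := by
        rw [Walk.concat_eq_append, Walk.getVert_append, if_neg (by omega),
          show h - 1 - q.length = 0 by omega, Walk.getVert_zero]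
      have := congrArg (fun z => Walk.getVert z (h-1)) heq
      rw [hgv] at this
      exact this
    · -- dist r w = h + 1
      have hdw : G.dist r w = h + 1 := by omega
      have hrw1 : G.dist r' w ≤ h := by
        have h1 := hheight w
        rcases le_total (G.dist r w) (G.dist r' w) with hle | hle
        · rw [min_eq_left hle] at h1; omega
        · rwa [min_eq_right hle] at h1
      have hdrr' : G.dist r r' = 1 := SimpleGraph.dist_eq_one_iff_adj.2 hadj
      have htri := ht.isConnected.dist_triangle (u := r) (v := r') (w := w)
      have hrw : G.dist r' w = h := by omega
      have hrv : G.dist r' v = h + 1 := by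
        rcases adj_dist ht hw r' with hc2 | hc2 <;> omega
      have hr'p : r' ∉ p.support := by
        intro hrs
        have e1 := path_len ht _ (hp.dropUntil hrs)
        have e2 := Walk.length_dropUntil_le p hrs
        omega
      have hqa : (Walk.cons hadj.symm p).IsPath := hp.cons hr'p
      obtain ⟨q, hq, hqlen0⟩ := dist_path ht r' w
      have hqlen : q.length = h := by omega
      have hvq : v ∉ q.support := by
        intro hvs
        have e1 := Walk.length_takeUntil_le q hvs
        have e2 := path_len ht _ (hq.takeUntil hvs)
        omega
      have hqb : (q.concat hw.symm).IsPath := isPath_concat hq hw.symm hvq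
      have heq := (ht.existsUnique_path r' v).unique hqb hqa
      have hgv1 : (q.concat hw.symm).getVert h = w := by
        rw [Walk.concat_eq_append, Walk.getVert_append, if_neg (by omega),
          show h - q.length = 0 by omega, Walk.getVert_zero]
      have hgv2 : (Walk.cons hadj.symm p).getVert h = p.getVert (h-1) := by
        rw [Walk.getVert_cons p hadj.symm (by omega)]
      have := congrArg (fun z => Walk.getVert z h) heq
      rw [hgv1, hgv2] at this
      exact this
  have hns : G.neighborFinset v = {p.getVert (h-1)} := by
    ext w
    rw [SimpleGraph.mem_neighborFinset, Finset.mem_singleton]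
    exact ⟨hkey w, fun he => he ▸ hadju0.symm⟩
  rw [← SimpleGraph.card_neighborFinset_eq_degree, hns, Finset.card_singleton]

lemma deg_pos (ht : G.IsTree) {r r' : V} (hrr' : r ≠ r') (hadj : G.Adj r r') (u : V) :
    0 < G.degree u := by
  rw [G.degree_pos_iff_exists_adj]
  by_cases hur : u = r
  · exact ⟨r', hur ▸ hadj⟩
  · obtain ⟨p, hp, hlen⟩ := dist_path ht u r
    have hdpos : 0 < G.dist u r := ht.isConnected.pos_dist_of_ne hur
    have := p.adj_getVert_succ (show 0 < p.length by omega)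
    rw [Walk.getVert_zero] at this
    exact ⟨p.getVert 1, this⟩

end DegLemmas


theorem stmt14 {V : Type*} [Fintype V] [DecidableEq V]
    (G : SimpleGraph V) [DecidableRel G.Adj] (r r' : V) (h : ℕ) (m : ℕ → ℕ)
    (hh : 1 ≤ h) (hm0 : 3 ≤ m 0)
    (hrr' : r ≠ r') (hadj : G.Adj r r')
    (htree : G.IsTree)
    (hheight : ∀ v, min (G.dist r v) (G.dist r' v) ≤ h)
    (hmax : ∃ v, min (G.dist r v) (G.dist r' v) = h)
    (hdeg : ∀ v, G.degree v = m (min (G.dist r v) (G.dist r' v))) :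
    IsGreatest (spectrum ℝ (randic G)) 1 ∧
    (1 : ℝ) ∈ spectrum ℝ (Pz h (fun i => (m i : ℝ)) 2) := by
  classical
  have hdpos : ∀ u, 0 < G.degree u := deg_pos htree hrr' hadj
  obtain ⟨v, hv⟩ := hmax
  have hfacts : m h = 1 ∧ ∀ n, 1 ≤ n → n < h → 2 ≤ m n := by
    rcases le_total (G.dist r v) (G.dist r' v) with hle | hle
    · have hv1 : G.dist r v = h := by rw [min_eq_left hle] at hv; exact hv
      have hv2 : h ≤ G.dist r' v := hv1 ▸ hle
      constructor
      · have h1 := leaf_deg htree hadj hh hheight hv1 hv2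
        have hd := hdeg v
        rw [min_eq_left hle, hv1] at hd
        omega
      · intro n hn1 hn2
        obtain ⟨u, hu1, hu2, hu3⟩ := interior_deg htree hv1 hv2 hn1 hn2
        have hd := hdeg u
        rw [min_eq_left (by omega : G.dist r u ≤ G.dist r' u), hu1] at hd
        omega
    · have hheight' : ∀ u, min (G.dist r' u) (G.dist r u) ≤ h := fun u => by
        rw [min_comm]; exact hheight u
      have hv' : min (G.dist r' v) (G.dist r v) = h := by rw [min_comm]; exact hv
      have hv1 : G.dist r' v = h := by rw [min_eq_left hle] at hv'; exact hv'
      have hv2 : h ≤ G.dist r v := hv1 ▸ hle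
      constructor
      · have h1 := leaf_deg htree hadj.symm hh hheight' hv1 hv2
        have hd := hdeg v
        rw [min_comm, min_eq_left hle, hv1] at hd
        omega
      · intro n hn1 hn2
        obtain ⟨u, hu1, hu2, hu3⟩ := interior_deg htree hv1 hv2 hn1 hn2
        have hd := hdeg u
        rw [min_comm, min_eq_left (by omega : G.dist r' u ≤ G.dist r u), hu1] at hd
        omega
  obtain ⟨hmh, hmmid⟩ := hfacts
  refine ⟨⟨?_, ?_⟩, ?_⟩
  · rw [mem_spectrum_iff_eig]
    refine ⟨fun u => Real.sqrt (G.degree u), ?_, ?_⟩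
    · intro h0
      have h1 : Real.sqrt (G.degree r) = 0 := congrFun h0 r
      have h2 : (0:ℝ) < Real.sqrt (G.degree r) := by
        apply Real.sqrt_pos.mpr
        exact_mod_cast hdpos r
      linarith
    · rw [one_smul]; exact randic_fixed G
  · intro μ hμ
    rw [mem_spectrum_iff_eig] at hμ
    obtain ⟨x, hx0, hxe⟩ := hμ
    have := randic_bound G hdpos x hx0 hxe
    exact le_trans (le_abs_self μ) this
  · apply pz_eig h (fun i => (m i : ℝ)) hh
    · intro i hi
      rcases Nat.eq_zero_or_pos i with rfl | hipos
      · have : (3:ℝ) ≤ (m 0 : ℝ) := by exact_mod_cast hm0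
        linarith
      · have := hmmid i hipos hi
        exact_mod_cast this
    · exact_mod_cast hmh
end TreeAux
end
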